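/- arXiv:1411.4584 — 2 statements merged into one kernel-verified Lean document; each statement's English description precedes it below -/
import Mathlib

section
/- Let p ≥ 2 be an even integer, let H = {h : [n] → [m]} be a 4p-wise independent hash family, and let D be a 4p-wise independent distribution over {−1,1}^n. Then for h uniform in H, x ∼ D, and any vector v ∈ ℝ^n: E[(‖v‖_2² − ‖v D(x) A(h)ᵀ‖_2²)^p] ≤ O(p)^{2p}·(‖v‖_2^4/m)^{p/2} + O(p)^{2p}·‖v‖_4^{2p}. -/
open Finset

/-- The map sending a boolean to the corresponding sign `±1`. -/
noncomputable def pm (b : Bool) : ℝ := if b then 1 else -1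

lemma pm_mul_self (b : Bool) : pm b * pm b = 1 := by
  unfold pm; cases b <;> norm_num

lemma pm_pow (b : Bool) (d : ℕ) : pm b ^ d = if Even d then 1 else pm b := by
  unfold pm; cases b <;> simp <;> rcases Nat.even_or_odd d with h | h
  · simp [h, h.neg_one_pow]
  · simp [h, h.neg_one_pow, Nat.not_even_iff_odd.mpr h]

section aux

variable {n mm pp : ℕ}

/-- The set of proper (off-diagonal) ordered pairs. -/
def Pset (n : ℕ) : Finset (Fin n × Fin n) := univ.filter (fun e => e.1 ≠ e.2)

/-- The term of the expansion of the quadratic form. -/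
noncomputable def Fterm (v : Fin n → ℝ) (h : Fin n → Fin mm) (x : Fin n → Bool)
    (e : Fin n × Fin n) : ℝ :=
  (v e.1 * v e.2) * (pm (x e.1) * pm (x e.2)) * (if h e.1 = h e.2 then 1 else 0)

lemma claim1 (v : Fin n → ℝ) (h : Fin n → Fin mm) (x : Fin n → Bool) :
    ((∑ i, v i ^ 2) -
        ∑ j : Fin mm, (∑ i ∈ univ.filter fun i => h i = j, v i * pm (x i)) ^ 2)
      = -∑ e ∈ Pset n, Fterm v h x e := by
  classical
  set f : Fin n → ℝ := fun i => v i * pm (x i) with hf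
  set G : Fin n × Fin n → ℝ :=
    fun e => (f e.1 * f e.2) * (if h e.1 = h e.2 then 1 else 0) with hG
  have key : ∀ j : Fin mm, (∑ i ∈ univ.filter fun i => h i = j, f i) ^ 2
      = ∑ i : Fin n, ∑ i' : Fin n,
          (if h i = j then f i else 0) * (if h i' = j then f i' else 0) := by
    intro j
    rw [sq, Finset.sum_filter, Finset.sum_mul_sum]
  have swap : (∑ j : Fin mm, ∑ i : Fin n, ∑ i' : Fin n,
      (if h i = j then f i else 0) * (if h i' = j then f i' else 0))
      = ∑ i : Fin n, ∑ i' : Fin n, G (i, i') := by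
    rw [Finset.sum_comm]
    refine Finset.sum_congr rfl fun i _ => ?_
    rw [Finset.sum_comm]
    refine Finset.sum_congr rfl fun i' _ => ?_
    have : ∀ j : Fin mm, (if h i = j then f i else 0) * (if h i' = j then f i' else 0)
        = if h i = j then (if h i' = h i then f i * f i' else 0) else 0 := by
      intro j
      by_cases h1 : h i = j <;> by_cases h2 : h i' = j <;>
        simp [h1, h2] <;> simp_all <;> tauto
    simp only [this, Finset.sum_ite_eq, Finset.mem_univ, if_true]
    by_cases h2 : h i' = h i
    · rw [if_pos h2, hG]; simp only [if_pos h2.symm]; ring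
    · have h2' : ¬ (h i = h i') := fun hc => h2 hc.symm
      simp [hG, h2, h2']
  have expand : (∑ j : Fin mm, (∑ i ∈ univ.filter fun i => h i = j, f i) ^ 2)
      = ∑ e : Fin n × Fin n, G e := by
    simp only [key]
    rw [swap, ← Fintype.sum_prod_type]
  have split : (∑ e : Fin n × Fin n, G e)
      = (∑ e ∈ Pset n, G e) + ∑ i : Fin n, v i ^ 2 := by
    have h1 : (∑ e ∈ univ.filter (fun e : Fin n × Fin n => ¬ e.1 ≠ e.2), G e)
        = ∑ i : Fin n, v i ^ 2 := by
      rw [show (univ.filter (fun e : Fin n × Fin n => ¬ e.1 ≠ e.2))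
          = univ.image (fun i : Fin n => (i, i)) from ?_]
      · rw [Finset.sum_image (by intro a _ b _ hab; simpa using hab)]
        refine Finset.sum_congr rfl fun i _ => ?_
        simp only [hG, hf]
        norm_num
        nlinarith [pm_mul_self (x i)]
      · ext e
        simp only [Finset.mem_filter, Finset.mem_univ, true_and, not_not, Finset.mem_image]
        constructor
        · intro he; exact ⟨e.1, congrArg (Prod.mk e.1) he⟩
        · rintro ⟨i, rfl⟩; rfl
    rw [← Finset.sum_filter_add_sum_filter_not univ (fun e : Fin n × Fin n => e.1 ≠ e.2) G,
      h1]
    rfl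
  have hFG : ∀ e ∈ Pset n, Fterm v h x e = G e := by
    intro e _
    simp only [Fterm, hG, hf]; ring
  rw [expand, split, Finset.sum_congr rfl hFG]
  ring
end aux
section aux2

variable {n mm pp : ℕ}

/-- endpoint map: slot `(s,b)` of the edge list `t` maps to a vertex. -/
def It (t : Fin pp → Fin n × Fin n) (u : Fin pp × Bool) : Fin n :=
  if u.2 then (t u.1).2 else (t u.1).1

/-- vertex set of `t`. -/
def Vt (t : Fin pp → Fin n × Fin n) : Finset (Fin n) := Finset.image (It t) Finset.univ

/-- degree (multiplicity) of vertex `i`. -/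
def deg (t : Fin pp → Fin n × Fin n) (i : Fin n) : ℕ :=
  (Finset.univ.filter (fun u => It t u = i)).card

/-- number of degree-2 vertices. -/
def tauf (t : Fin pp → Fin n × Fin n) : ℕ :=
  ((Vt t).filter (fun i => deg t i = 2)).card

lemma mem_Vt {t : Fin pp → Fin n × Fin n} {i : Fin n} :
    i ∈ Vt t ↔ ∃ u, It t u = i := by
  simp [Vt]

lemma fst_mem_Vt (t : Fin pp → Fin n × Fin n) (s : Fin pp) : (t s).1 ∈ Vt t :=
  mem_Vt.2 ⟨(s, false), rfl⟩

lemma snd_mem_Vt (t : Fin pp → Fin n × Fin n) (s : Fin pp) : (t s).2 ∈ Vt t :=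
  mem_Vt.2 ⟨(s, true), rfl⟩

lemma card_Vt_le (t : Fin pp → Fin n × Fin n) : (Vt t).card ≤ 2 * pp := by
  calc (Vt t).card ≤ (Finset.univ : Finset (Fin pp × Bool)).card := Finset.card_image_le
  _ = 2 * pp := by simp [mul_comm]

lemma sum_deg (t : Fin pp → Fin n × Fin n) : ∑ i ∈ Vt t, deg t i = 2 * pp := by
  have := Finset.card_eq_sum_card_fiberwise
    (f := It t) (s := (Finset.univ : Finset (Fin pp × Bool))) (t := Vt t)
    (fun u _ => mem_Vt.2 ⟨u, rfl⟩)
  simp only [Finset.card_univ, Fintype.card_prod, Fintype.card_fin, Fintype.card_bool] at this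
  calc ∑ i ∈ Vt t, deg t i = pp * 2 := this.symm
  _ = 2 * pp := mul_comm _ _

lemma deg_pos {t : Fin pp → Fin n × Fin n} {i : Fin n} (hi : i ∈ Vt t) : 0 < deg t i := by
  obtain ⟨u, hu⟩ := mem_Vt.1 hi
  exact Finset.card_pos.2 ⟨u, Finset.mem_filter.2 ⟨Finset.mem_univ _, hu⟩⟩

lemma tauf_le (t : Fin pp → Fin n × Fin n) : tauf t ≤ (Vt t).card :=
  Finset.card_filter_le _ _

/-- edge relation of `t`. -/
def Erel (t : Fin pp → Fin n × Fin n) (a b : Fin n) : Prop :=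
  ∃ s, t s = (a, b) ∨ t s = (b, a)

/-- quotient map to connected components. -/
def qt (t : Fin pp → Fin n × Fin n) : Fin n → Quot (Erel t) := Quot.mk _

open Classical in
/-- representative of the component of `i` (junk outside `Vt t`). -/
noncomputable def rep (t : Fin pp → Fin n × Fin n) (i : Fin n) : Fin n :=
  if hi : i ∈ Vt t then
    ((Vt t).filter (fun a => qt t a = qt t i)).min' ⟨i, Finset.mem_filter.2 ⟨hi, rfl⟩⟩
  else i

open Classical in
/-- set of representatives. -/
noncomputable def Rt (t : Fin pp → Fin n × Fin n) : Finset (Fin n) :=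
  (Vt t).image (rep t)

open Classical in
lemma rep_spec {t : Fin pp → Fin n × Fin n} {i : Fin n} (hi : i ∈ Vt t) :
    rep t i ∈ Vt t ∧ qt t (rep t i) = qt t i := by
  rw [rep, dif_pos hi]
  have := Finset.min'_mem ((Vt t).filter (fun a => qt t a = qt t i))
    ⟨i, Finset.mem_filter.2 ⟨hi, rfl⟩⟩
  exact Finset.mem_filter.1 this |>.imp id id

open Classical in
lemma rep_congr {t : Fin pp → Fin n × Fin n} {a b : Fin n} (ha : a ∈ Vt t) (hb : b ∈ Vt t)
    (hq : qt t a = qt t b) : rep t a = rep t b := by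
  rw [rep, rep, dif_pos ha, dif_pos hb]
  have hset : (Vt t).filter (fun c => qt t c = qt t a)
      = (Vt t).filter (fun c => qt t c = qt t b) := by
    apply Finset.filter_congr
    intro c _
    rw [hq]
  congr 1

lemma rep_mem_Rt {t : Fin pp → Fin n × Fin n} {i : Fin n} (hi : i ∈ Vt t) :
    rep t i ∈ Rt t := Finset.mem_image_of_mem _ hi

/-- a compatible coloring is constant on components. -/
lemma compat_const {t : Fin pp → Fin n × Fin n} {j : Fin n → Fin mm}
    (hj : ∀ s, j (t s).1 = j (t s).2) {a b : Fin n} (hq : qt t a = qt t b) :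
    j a = j b := by
  have key : ∀ a b, Relation.EqvGen (Erel t) a b → j a = j b := by
    intro a b h
    induction h with
    | rel a b hab => obtain ⟨s, hs | hs⟩ := hab
                     · have := hj s; rw [hs] at this; exact this
                     · have := hj s; rw [hs] at this; exact this.symm
    | refl => rfl
    | symm _ _ _ ih => exact ih.symm
    | trans _ _ _ _ _ ih1 ih2 => exact ih1.trans ih2
  exact key a b (Quot.eqvGen_exact hq)

/-- every vertex has a distinct partner in the same component. -/
lemma partner {t : Fin pp → Fin n × Fin n} (ht : ∀ s, (t s).1 ≠ (t s).2) {i : Fin n}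
    (hi : i ∈ Vt t) : ∃ i', i' ∈ Vt t ∧ i' ≠ i ∧ qt t i' = qt t i := by
  obtain ⟨⟨s, b⟩, hu⟩ := mem_Vt.1 hi
  have hedge : qt t (t s).1 = qt t (t s).2 := Quot.sound ⟨s, Or.inl rfl⟩
  cases b
  · -- i = (t s).1, partner (t s).2
    refine ⟨(t s).2, snd_mem_Vt t s, ?_, ?_⟩
    · simp only [It] at hu; simp at hu
      rw [← hu]; exact fun hc => (ht s) hc.symm
    · simp only [It] at hu; simp at hu
      rw [← hu]; exact hedge.symm
  · refine ⟨(t s).1, fst_mem_Vt t s, ?_, ?_⟩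
    · simp only [It] at hu; simp at hu
      rw [← hu]; exact ht s
    · simp only [It] at hu; simp at hu
      rw [← hu]; exact hedge

open Classical in
lemma two_card_Rt_le {t : Fin pp → Fin n × Fin n} (ht : ∀ s, (t s).1 ≠ (t s).2) :
    2 * (Rt t).card ≤ (Vt t).card := by
  have hmap : ∀ i ∈ Vt t, rep t i ∈ Rt t := fun i hi => rep_mem_Rt hi
  rw [Finset.card_eq_sum_card_fiberwise hmap]
  have : ∀ r ∈ Rt t, 2 ≤ ((Vt t).filter (fun i => rep t i = r)).card := by
    intro r hr
    obtain ⟨i₀, hi₀, hrep⟩ := Finset.mem_image.1 hr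
    obtain ⟨i₁, hi₁V, hi₁ne, hi₁q⟩ := partner ht hi₀
    have h1 : i₀ ∈ (Vt t).filter (fun i => rep t i = r) :=
      Finset.mem_filter.2 ⟨hi₀, hrep⟩
    have h2 : i₁ ∈ (Vt t).filter (fun i => rep t i = r) := by
      refine Finset.mem_filter.2 ⟨hi₁V, ?_⟩
      rw [rep_congr hi₁V hi₀ hi₁q, hrep]
    calc 2 = ({i₁, i₀} : Finset (Fin n)).card := (Finset.card_pair hi₁ne).symm
    _ ≤ _ := Finset.card_le_card (by intro a ha
                                     simp only [Finset.mem_insert, Finset.mem_singleton] at ha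
                                     rcases ha with rfl | rfl <;> assumption)
  calc 2 * (Rt t).card = ∑ _r ∈ Rt t, 2 := by rw [Finset.sum_const, smul_eq_mul, mul_comm]
  _ ≤ _ := Finset.sum_le_sum this

end aux2
section aux3

variable {n mm pp : ℕ}

lemma card_Rt_le (t : Fin pp → Fin n × Fin n) : (Rt t).card ≤ (Vt t).card :=
  Finset.card_image_le

lemma Hval_nonneg (ν : (Fin n → Fin mm) → ℝ) (hν0 : ∀ h, 0 ≤ ν h)
    (t : Fin pp → Fin n × Fin n) :
    0 ≤ ∑ h, ν h * ∏ s, (if h (t s).1 = h (t s).2 then (1:ℝ) else 0) := by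
  apply Finset.sum_nonneg
  intro h _
  apply mul_nonneg (hν0 h)
  apply Finset.prod_nonneg
  intro s _
  split <;> norm_num

lemma Hval_le_card (hm : 0 < mm) (ν : (Fin n → Fin mm) → ℝ)
    (t : Fin pp → Fin n × Fin n)
    (hνV : ∀ j : Fin n → Fin mm,
      (∑ h, ν h * (if ∀ i ∈ Vt t, h i = j i then (1:ℝ) else 0))
        = (1 / (mm:ℝ)) ^ (Vt t).card) :
    (∑ h, ν h * ∏ s, (if h (t s).1 = h (t s).2 then (1:ℝ) else 0))
      ≤ (mm:ℝ) ^ (Rt t).card * (1 / (mm:ℝ)) ^ (Vt t).card := by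
  classical
  set jdef : Fin mm := ⟨0, hm⟩ with hjdef
  set Jall : Finset (Fin n → Fin mm) :=
    univ.filter (fun j => (∀ i, i ∉ Vt t → j i = jdef) ∧ ∀ s, j (t s).1 = j (t s).2)
    with hJall
  have step0 : ∀ h : Fin n → Fin mm,
      (∏ s, (if h (t s).1 = h (t s).2 then (1:ℝ) else 0))
        = if (∀ s, h (t s).1 = h (t s).2) then (1:ℝ) else 0 := by
    intro h
    rw [Finset.prod_boole]
    simp
  have step1 : ∀ h : Fin n → Fin mm,
      (if (∀ s, h (t s).1 = h (t s).2) then (1:ℝ) else 0)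
        = ∑ j ∈ Jall, (if ∀ i ∈ Vt t, h i = j i then (1:ℝ) else 0) := by
    intro h
    by_cases hc : ∀ s, h (t s).1 = h (t s).2
    · rw [if_pos hc]
      set jstar : Fin n → Fin mm := fun i => if i ∈ Vt t then h i else jdef with hjstar
      have hmem : jstar ∈ Jall := by
        rw [hJall, Finset.mem_filter]
        refine ⟨Finset.mem_univ _, fun i hi => by simp [hjstar, hi], fun s => ?_⟩
        simp only [hjstar, if_pos (fst_mem_Vt t s), if_pos (snd_mem_Vt t s)]
        exact hc s
      rw [Finset.sum_eq_single jstar]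
      · rw [if_pos]
        intro i hi
        simp [hjstar, hi]
      · intro b hb hne
        rw [if_neg]
        intro hagree
        apply hne
        funext i
        by_cases hi : i ∈ Vt t
        · rw [← hagree i hi]
          simp [hjstar, hi]
        · rw [(Finset.mem_filter.1 hb).2.1 i hi]
          simp [hjstar, hi]
      · intro habs
        exact absurd hmem habs
    · rw [if_neg hc]
      symm
      apply Finset.sum_eq_zero
      intro j hj
      rw [if_neg]
      intro hagree
      apply hc
      intro s
      rw [hagree _ (fst_mem_Vt t s), hagree _ (snd_mem_Vt t s)]
      exact (Finset.mem_filter.1 hj).2.2 s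
  have step2 : (∑ h, ν h * ∏ s, (if h (t s).1 = h (t s).2 then (1:ℝ) else 0))
      = (Jall.card : ℝ) * (1 / (mm:ℝ)) ^ (Vt t).card := by
    calc (∑ h, ν h * ∏ s, (if h (t s).1 = h (t s).2 then (1:ℝ) else 0))
        = ∑ h, ∑ j ∈ Jall, ν h * (if ∀ i ∈ Vt t, h i = j i then (1:ℝ) else 0) := by
          refine Finset.sum_congr rfl fun h _ => ?_
          rw [step0, step1, Finset.mul_sum]
      _ = ∑ j ∈ Jall, ∑ h, ν h * (if ∀ i ∈ Vt t, h i = j i then (1:ℝ) else 0) :=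
          Finset.sum_comm
      _ = ∑ _j ∈ Jall, (1 / (mm:ℝ)) ^ (Vt t).card :=
          Finset.sum_congr rfl fun j _ => hνV j
      _ = (Jall.card : ℝ) * (1 / (mm:ℝ)) ^ (Vt t).card := by
          rw [Finset.sum_const, nsmul_eq_mul]
  have step3 : Jall.card ≤ mm ^ (Rt t).card := by
    have hinj : Set.InjOn (fun (j : Fin n → Fin mm) (r : ↥(Rt t)) => j r) Jall := by
      intro j1 h1 j2 h2 heq
      have hj1 := (Finset.mem_filter.1 h1).2
      have hj2 := (Finset.mem_filter.1 h2).2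
      funext i
      by_cases hi : i ∈ Vt t
      · have e1 : j1 i = j1 (rep t i) := compat_const hj1.2 (rep_spec hi).2.symm
        have e2 : j2 i = j2 (rep t i) := compat_const hj2.2 (rep_spec hi).2.symm
        have e3 : j1 (rep t i) = j2 (rep t i) :=
          congrFun heq ⟨rep t i, rep_mem_Rt hi⟩
        rw [e1, e3, ← e2]
      · rw [hj1.1 i hi, hj2.1 i hi]
    have := Finset.card_le_card_of_injOn
      (fun (j : Fin n → Fin mm) (r : ↥(Rt t)) => j r)
      (fun a _ => Finset.mem_univ _) hinj
    calc Jall.card ≤ (univ : Finset (↥(Rt t) → Fin mm)).card := this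
      _ = mm ^ (Rt t).card := by
        rw [Finset.card_univ, Fintype.card_fun, Fintype.card_coe, Fintype.card_fin]
  rw [step2]
  apply mul_le_mul_of_nonneg_right
  · exact_mod_cast Nat.cast_le.2 step3
  · positivity

lemma pow_count_le (hm : 0 < mm) {c k τ : ℕ} (hck : 2 * c ≤ k) (hτ : τ ≤ k) :
    (mm:ℝ) ^ c * (1 / (mm:ℝ)) ^ k ≤ ((Real.sqrt mm)⁻¹) ^ τ := by
  have hm1 : (1:ℝ) ≤ mm := by exact_mod_cast hm
  have hs1 : (1:ℝ) ≤ Real.sqrt mm := by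
    rw [show (1:ℝ) = Real.sqrt 1 from (Real.sqrt_one).symm]
    exact Real.sqrt_le_sqrt hm1
  have hs0 : (0:ℝ) < Real.sqrt mm := lt_of_lt_of_le one_pos hs1
  have hck' : c ≤ k := le_trans (Nat.le_mul_of_pos_left c (by norm_num)) hck
  have hsq : Real.sqrt mm ^ 2 = (mm:ℝ) := Real.sq_sqrt (by positivity)
  have key : (mm:ℝ) ^ c * (1 / (mm:ℝ)) ^ k = ((Real.sqrt mm)⁻¹) ^ (2 * (k - c)) := by
    have hs : Real.sqrt mm ≠ 0 := ne_of_gt hs0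
    have e1 : Real.sqrt mm ^ (2 * c) = (mm:ℝ) ^ c := by rw [pow_mul, hsq]
    have e2 : (Real.sqrt mm)⁻¹ ^ (2 * k) = (1 / (mm:ℝ)) ^ k := by
      rw [inv_pow, pow_mul, hsq, one_div, inv_pow]
    rw [← e1, ← e2]
    have e3 : Real.sqrt mm ^ (2 * k) = Real.sqrt mm ^ (2 * c) * Real.sqrt mm ^ (2 * (k - c)) := by
      rw [← pow_add]
      congr 1
      omega
    rw [inv_pow, inv_pow, e3, mul_inv, ← mul_assoc,
      mul_inv_cancel₀ (pow_ne_zero _ hs), one_mul]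
  rw [key]
  apply pow_le_pow_of_le_one (by positivity) (inv_le_one_of_one_le₀ hs1)
  omega

lemma Hval_le (hm : 0 < mm) (ν : (Fin n → Fin mm) → ℝ)
    {t : Fin pp → Fin n × Fin n} (ht : ∀ s, (t s).1 ≠ (t s).2)
    (hνV : ∀ j : Fin n → Fin mm,
      (∑ h, ν h * (if ∀ i ∈ Vt t, h i = j i then (1:ℝ) else 0))
        = (1 / (mm:ℝ)) ^ (Vt t).card) :
    (∑ h, ν h * ∏ s, (if h (t s).1 = h (t s).2 then (1:ℝ) else 0))
      ≤ ((Real.sqrt mm)⁻¹) ^ tauf t :=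
  le_trans (Hval_le_card hm ν t hνV)
    (pow_count_le hm (two_card_Rt_le ht) (tauf_le t))

end aux3
section aux4

variable {n mm pp : ℕ}

/-- set of odd-degree vertices. -/
def Sodd (t : Fin pp → Fin n × Fin n) : Finset (Fin n) :=
  (Vt t).filter (fun i => ¬ Even (deg t i))

lemma Sodd_subset (t : Fin pp → Fin n × Fin n) : Sodd t ⊆ Vt t := Finset.filter_subset _ _

lemma prod_slots (t : Fin pp → Fin n × Fin n) (g : Fin n → ℝ) :
    (∏ s, g (t s).1 * g (t s).2) = ∏ i ∈ Vt t, g i ^ deg t i := by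
  have h1 : (∏ s, g (t s).1 * g (t s).2) = ∏ u : Fin pp × Bool, g (It t u) := by
    rw [Fintype.prod_prod_type]
    refine Finset.prod_congr rfl fun s _ => ?_
    rw [Fintype.prod_bool]
    simp [It]
    ring
  rw [h1, Finset.prod_comp (fun i => g i) (It t)]
  rfl

lemma prod_pm_eq (t : Fin pp → Fin n × Fin n) (x : Fin n → Bool) :
    (∏ s, pm (x (t s).1) * pm (x (t s).2)) = ∏ i ∈ Sodd t, pm (x i) := by
  rw [prod_slots t (fun i => pm (x i))]
  rw [← Finset.prod_filter_mul_prod_filter_not (Vt t) (fun i => Even (deg t i))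
    (fun i => pm (x i) ^ deg t i)]
  have h1 : (∏ i ∈ (Vt t).filter (fun i => Even (deg t i)), pm (x i) ^ deg t i) = 1 := by
    apply Finset.prod_eq_one
    intro i hi
    rw [pm_pow, if_pos (Finset.mem_filter.1 hi).2]
  have h2 : (∏ i ∈ (Vt t).filter (fun i => ¬ Even (deg t i)), pm (x i) ^ deg t i)
      = ∏ i ∈ Sodd t, pm (x i) := by
    refine Finset.prod_congr rfl fun i hi => ?_
    rw [pm_pow, if_neg (Finset.mem_filter.1 hi).2]
  rw [h1, h2, one_mul]

lemma abs_coeff (v : Fin n → ℝ) (t : Fin pp → Fin n × Fin n) :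
    |∏ s, v (t s).1 * v (t s).2| = ∏ i ∈ Vt t, |v i| ^ deg t i := by
  rw [Finset.abs_prod]
  have : ∀ s : Fin pp, |v (t s).1 * v (t s).2| = |v (t s).1| * |v (t s).2| :=
    fun s => abs_mul _ _
  rw [Finset.prod_congr rfl (fun s _ => this s), prod_slots t (fun i => |v i|)]

lemma max_pow_bound {A B : ℝ} (hA : 0 ≤ A) (hB : 0 ≤ B) {τ P : ℕ} (h : τ ≤ P) :
    A ^ τ * B ^ (P - τ) ≤ A ^ P + B ^ P := by
  set M := max A B with hM
  have hM0 : 0 ≤ M := le_trans hA (le_max_left _ _)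
  calc A ^ τ * B ^ (P - τ) ≤ M ^ τ * M ^ (P - τ) := by
        apply mul_le_mul (pow_le_pow_left₀ hA (le_max_left _ _) _)
          (pow_le_pow_left₀ hB (le_max_right _ _) _) (by positivity) (by positivity)
    _ = M ^ P := by rw [← pow_add]; congr 1; omega
    _ ≤ A ^ P + B ^ P := by
        rcases max_choice A B with hc | hc <;> rw [hM, hc]
        · exact le_add_of_nonneg_right (by positivity)
        · exact le_add_of_nonneg_left (by positivity)

/-- the basic `ℓ_q ≤ ℓ_4` estimate for even `q ≥ 4`. -/
lemma sum_abs_pow_le (v : Fin n → ℝ) {q : ℕ} (hq4 : 4 ≤ q) (hqe : Even q) :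
    (∑ i, |v i| ^ q) ≤ (Real.sqrt (∑ i, v i ^ 4)) ^ (q / 2) := by
  set B := Real.sqrt (∑ i, v i ^ 4) with hB
  have hB0 : 0 ≤ B := Real.sqrt_nonneg _
  have hBsq : B ^ 2 = ∑ i, v i ^ 4 := Real.sq_sqrt (by positivity)
  have hvB : ∀ i, |v i| ^ 2 ≤ B := by
    intro i
    have h1 : v i ^ 4 ≤ ∑ i', v i' ^ 4 :=
      Finset.single_le_sum (f := fun i' => v i' ^ 4) (fun i' _ => by positivity)
        (Finset.mem_univ i)
    have h2 : Real.sqrt (v i ^ 4) = |v i| ^ 2 := by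
      rw [show v i ^ 4 = (|v i| ^ 2) ^ 2 by rw [sq_abs]; ring]
      exact Real.sqrt_sq (by positivity)
    rw [← h2, hB]
    exact Real.sqrt_le_sqrt h1
  obtain ⟨c, hc⟩ := hqe
  have key : ∀ i, |v i| ^ q ≤ v i ^ 4 * B ^ ((q - 4) / 2) := by
    intro i
    have e1 : |v i| ^ q = |v i| ^ 4 * (|v i| ^ 2) ^ ((q - 4) / 2) := by
      rw [← pow_mul, ← pow_add]
      congr 1
      omega
    rw [e1, show |v i| ^ 4 = v i ^ 4 by rw [← abs_pow, abs_of_nonneg (by positivity)]]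
    apply mul_le_mul_of_nonneg_left _ (by positivity)
    exact pow_le_pow_left₀ (by positivity) (hvB i) _
  calc (∑ i, |v i| ^ q) ≤ ∑ i, v i ^ 4 * B ^ ((q - 4) / 2) :=
        Finset.sum_le_sum fun i _ => key i
    _ = B ^ 2 * B ^ ((q - 4) / 2) := by rw [← Finset.sum_mul, hBsq]
    _ = B ^ (q / 2) := by rw [← pow_add]; congr 1; omega

/-- per-pattern numeric bound. -/
lemma pattern_bound (v : Fin n → ℝ) {β : Type*} (s : Finset β) (D : β → ℕ) {r : ℝ}
    (hr : 0 ≤ r) (hD : ∀ b ∈ s, Even (D b) ∧ 2 ≤ D b) (hsum : ∑ b ∈ s, D b = 2 * pp) :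
    r ^ (s.filter (fun b => D b = 2)).card * ∏ b ∈ s, (∑ i, |v i| ^ D b)
      ≤ (r * ∑ i, v i ^ 2) ^ pp + (Real.sqrt (∑ i, v i ^ 4)) ^ pp := by
  classical
  set τ := (s.filter (fun b => D b = 2)).card with hτ
  set B := Real.sqrt (∑ i, v i ^ 4) with hB
  have hB0 : 0 ≤ B := Real.sqrt_nonneg _
  have hN2 : (0:ℝ) ≤ ∑ i, v i ^ 2 := by positivity
  have hsum2 : ∑ b ∈ s.filter (fun b => D b = 2), D b = 2 * τ := by
    rw [Finset.sum_congr rfl (fun b hb => (Finset.mem_filter.1 hb).2), Finset.sum_const,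
      smul_eq_mul, hτ, mul_comm]
  have hτle : τ ≤ pp := by
    have h1 : ∑ b ∈ s.filter (fun b => D b = 2), D b ≤ ∑ b ∈ s, D b :=
      Finset.sum_le_sum_of_subset (Finset.filter_subset _ _)
    omega
  have hsplit : (∏ b ∈ s, (∑ i, |v i| ^ D b))
      = (∏ b ∈ s.filter (fun b => D b = 2), (∑ i, |v i| ^ D b))
        * ∏ b ∈ s.filter (fun b => ¬ D b = 2), (∑ i, |v i| ^ D b) :=
    (Finset.prod_filter_mul_prod_filter_not s _ _).symm
  have h2part : (∏ b ∈ s.filter (fun b => D b = 2), (∑ i, |v i| ^ D b))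
      = (∑ i, v i ^ 2) ^ τ := by
    rw [Finset.prod_congr rfl (fun b hb => ?_), Finset.prod_const, hτ]
    rw [(Finset.mem_filter.1 hb).2]
    exact Finset.sum_congr rfl fun i _ => sq_abs (v i)
  have hbig : (∏ b ∈ s.filter (fun b => ¬ D b = 2), (∑ i, |v i| ^ D b))
      ≤ B ^ (pp - τ) := by
    have hfac : ∀ b ∈ s.filter (fun b => ¬ D b = 2),
        (∑ i, |v i| ^ D b) ≤ B ^ (D b / 2) := by
      intro b hb
      obtain ⟨hbs, hb2⟩ := Finset.mem_filter.1 hb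
      obtain ⟨he, h2⟩ := hD b hbs
      exact sum_abs_pow_le v (by rcases he with ⟨c, hc⟩; omega) he
    calc (∏ b ∈ s.filter (fun b => ¬ D b = 2), (∑ i, |v i| ^ D b))
        ≤ ∏ b ∈ s.filter (fun b => ¬ D b = 2), B ^ (D b / 2) :=
          Finset.prod_le_prod (fun b _ => by positivity) hfac
      _ = B ^ (∑ b ∈ s.filter (fun b => ¬ D b = 2), D b / 2) := by
          rw [← Finset.prod_pow_eq_pow_sum]
      _ = B ^ (pp - τ) := by
          congr 1
          have e1 : ∑ b ∈ s.filter (fun b => ¬ D b = 2), (D b / 2) * 2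
              = ∑ b ∈ s.filter (fun b => ¬ D b = 2), D b := by
            refine Finset.sum_congr rfl fun b hb => ?_
            obtain ⟨he, _⟩ := hD b (Finset.mem_filter.1 hb).1
            rcases he with ⟨c, hc⟩
            omega
          have e2 : ∑ b ∈ s.filter (fun b => D b = 2), D b
              + ∑ b ∈ s.filter (fun b => ¬ D b = 2), D b = 2 * pp := by
            rw [Finset.sum_filter_add_sum_filter_not]
            exact hsum
          have e3 := Finset.sum_mul (s.filter (fun b => ¬ D b = 2)) (fun b => D b / 2) 2
          omega
  calc r ^ τ * ∏ b ∈ s, (∑ i, |v i| ^ D b)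
      ≤ r ^ τ * ((∑ i, v i ^ 2) ^ τ * B ^ (pp - τ)) := by
        rw [hsplit, h2part]
        apply mul_le_mul_of_nonneg_left _ (by positivity)
        apply mul_le_mul_of_nonneg_left hbig (by positivity)
    _ = (r * ∑ i, v i ^ 2) ^ τ * B ^ (pp - τ) := by rw [mul_pow, mul_assoc]
    _ ≤ (r * ∑ i, v i ^ 2) ^ pp + B ^ pp :=
        max_pow_bound (by positivity) hB0 hτle

end aux4
section aux5

variable {n mm pp : ℕ}

/-- sorted list of vertices. -/
def sortedV (t : Fin pp → Fin n × Fin n) : List (Fin n) := (Vt t).sort (·≤·)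

lemma mem_sortedV {t : Fin pp → Fin n × Fin n} (u : Fin pp × Bool) :
    It t u ∈ sortedV t := by
  rw [sortedV, Finset.mem_sort]
  exact mem_Vt.2 ⟨u, rfl⟩

/-- the pattern of `t` : each slot maps to the rank of its vertex. -/
def phiF (t : Fin pp → Fin n × Fin n) (u : Fin pp × Bool) : Fin (2 * pp) :=
  ⟨List.idxOf (It t u) (sortedV t), by
    have h1 : List.idxOf (It t u) (sortedV t) < (sortedV t).length :=
      List.idxOf_lt_length_iff.2 (mem_sortedV u)
    have h2 : (sortedV t).length = (Vt t).card := Finset.length_sort _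
    have h3 := card_Vt_le t
    omega⟩

/-- the vertex of rank `b` (with junk default). -/
def psiF (t : Fin pp → Fin n × Fin n) (dflt : Fin n) (b : Fin (2 * pp)) : Fin n :=
  (sortedV t).getD b dflt

lemma psi_phi (t : Fin pp → Fin n × Fin n) (dflt : Fin n) (u : Fin pp × Bool) :
    psiF t dflt (phiF t u) = It t u := by
  have hlt : List.idxOf (It t u) (sortedV t) < (sortedV t).length :=
    List.idxOf_lt_length_iff.2 (mem_sortedV u)
  rw [psiF, phiF]
  dsimp only
  rw [List.getD_eq_getElem _ _ hlt]
  exact List.getElem_idxOf hlt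

lemma psi_injOn (t : Fin pp → Fin n × Fin n) (dflt : Fin n) {b1 b2 : Fin (2 * pp)}
    (h1 : b1 ∈ Finset.image (phiF t) Finset.univ)
    (h2 : b2 ∈ Finset.image (phiF t) Finset.univ)
    (he : psiF t dflt b1 = psiF t dflt b2) : b1 = b2 := by
  obtain ⟨u1, _, hu1⟩ := Finset.mem_image.1 h1
  obtain ⟨u2, _, hu2⟩ := Finset.mem_image.1 h2
  have hlt1 : (b1 : ℕ) < (sortedV t).length := by
    rw [← hu1, phiF]
    exact List.idxOf_lt_length_iff.2 (mem_sortedV u1)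
  have hlt2 : (b2 : ℕ) < (sortedV t).length := by
    rw [← hu2, phiF]
    exact List.idxOf_lt_length_iff.2 (mem_sortedV u2)
  have e1 : psiF t dflt b1 = (sortedV t)[(b1 : ℕ)] := List.getD_eq_getElem _ _ hlt1
  have e2 : psiF t dflt b2 = (sortedV t)[(b2 : ℕ)] := List.getD_eq_getElem _ _ hlt2
  rw [e1, e2] at he
  have hnd : (sortedV t).Nodup := Finset.sort_nodup _ _
  exact Fin.ext ((hnd.getElem_inj_iff).1 he)

lemma Vt_eq_image (t : Fin pp → Fin n × Fin n) (dflt : Fin n) :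
    Vt t = (Finset.image (phiF t) Finset.univ).image (psiF t dflt) := by
  rw [Finset.image_image]
  have : Vt t = Finset.image (fun u => psiF t dflt (phiF t u)) Finset.univ := by
    rw [Vt]
    exact Finset.image_congr (fun u _ => (psi_phi t dflt u).symm)
  exact this

lemma deg_psi (t : Fin pp → Fin n × Fin n) (dflt : Fin n) {b : Fin (2 * pp)}
    (hb : b ∈ Finset.image (phiF t) Finset.univ) :
    deg t (psiF t dflt b) = (Finset.univ.filter (fun u => phiF t u = b)).card := by
  rw [deg]
  congr 1
  apply Finset.filter_congr
  intro u _
  constructor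
  · intro h
    apply psi_injOn t dflt (Finset.mem_image_of_mem _ (Finset.mem_univ u)) hb
    rw [psi_phi]
    exact h
  · intro h
    rw [← h, psi_phi]

lemma tauf_eq (t : Fin pp → Fin n × Fin n) (dflt : Fin n) :
    tauf t = ((Finset.image (phiF t) Finset.univ).filter
      (fun b => (Finset.univ.filter (fun u => phiF t u = b)).card = 2)).card := by
  rw [tauf, Vt_eq_image t dflt, Finset.filter_image]
  rw [Finset.card_image_of_injOn (fun b1 hb1 b2 hb2 he =>
    psi_injOn t dflt (Finset.mem_of_mem_filter _ hb1) (Finset.mem_of_mem_filter _ hb2) he)]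
  congr 1
  apply Finset.filter_congr
  intro b hb
  rw [deg_psi t dflt hb]

lemma prod_over_V (t : Fin pp → Fin n × Fin n) (dflt : Fin n) (v : Fin n → ℝ) :
    (∏ i ∈ Vt t, |v i| ^ deg t i)
      = ∏ b ∈ Finset.image (phiF t) Finset.univ,
          |v (psiF t dflt b)| ^ (Finset.univ.filter (fun u => phiF t u = b)).card := by
  rw [Vt_eq_image t dflt, Finset.prod_image (fun b1 hb1 b2 hb2 he =>
    psi_injOn t dflt hb1 hb2 he)]
  exact Finset.prod_congr rfl (fun b hb => by rw [deg_psi t dflt hb])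

lemma sum_D (t : Fin pp → Fin n × Fin n) :
    ∑ b ∈ Finset.image (phiF t) Finset.univ,
      (Finset.univ.filter (fun u => phiF t u = b)).card = 2 * pp := by
  have := Finset.card_eq_sum_card_fiberwise
    (f := phiF t) (s := (Finset.univ : Finset (Fin pp × Bool)))
    (t := Finset.image (phiF t) Finset.univ)
    (fun u _ => Finset.mem_image_of_mem _ (Finset.mem_univ u))
  simp only [Finset.card_univ, Fintype.card_prod, Fintype.card_fin, Fintype.card_bool] at this
  omega

/-- The main counting bound. -/
lemma counting (hpp : 0 < pp) (v : Fin n → ℝ) {r : ℝ} (hr : 0 ≤ r)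
    (T : Finset (Fin pp → Fin n × Fin n))
    (hT : ∀ t ∈ T, ∀ i ∈ Vt t, Even (deg t i)) :
    ∑ t ∈ T, (r ^ tauf t * ∏ i ∈ Vt t, |v i| ^ deg t i)
      ≤ (((2 * pp) ^ (2 * pp) : ℕ) : ℝ)
        * ((r * ∑ i, v i ^ 2) ^ pp + (Real.sqrt (∑ i, v i ^ 4)) ^ pp) := by
  classical
  set RHSterm := (r * ∑ i, v i ^ 2) ^ pp + (Real.sqrt (∑ i, v i ^ 4)) ^ pp with hRHS
  have hRT0 : 0 ≤ RHSterm := by positivity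
  rw [← Finset.sum_fiberwise_of_maps_to (g := fun t => phiF t)
    (t := T.image (fun t => phiF t)) (fun t ht => Finset.mem_image_of_mem _ ht)
    (fun t => r ^ tauf t * ∏ i ∈ Vt t, |v i| ^ deg t i)]
  have perphi : ∀ φ ∈ T.image (fun t => phiF t),
      (∑ t ∈ T.filter (fun t => phiF t = φ),
        (r ^ tauf t * ∏ i ∈ Vt t, |v i| ^ deg t i)) ≤ RHSterm := by
    intro φ hφ
    obtain ⟨t₀, ht₀T, hφ0⟩ := Finset.mem_image.1 hφ
    set dflt : Fin n := (t₀ ⟨0, hpp⟩).1 with hdflt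
    set D : Fin (2 * pp) → ℕ := fun b => (Finset.univ.filter (fun u => φ u = b)).card
      with hD
    set imφ : Finset (Fin (2 * pp)) := Finset.image φ Finset.univ with himφ
    have hDsum : ∑ b ∈ imφ, D b = 2 * pp := by
      rw [himφ, hD, ← hφ0]
      exact sum_D t₀
    have hDgood : ∀ b ∈ imφ, Even (D b) ∧ 2 ≤ D b := by
      intro b hb
      rw [himφ, ← hφ0] at hb
      have hdeq : deg t₀ (psiF t₀ dflt b) = D b := by
        rw [deg_psi t₀ dflt hb, hD, ← hφ0]
      have hmemV : psiF t₀ dflt b ∈ Vt t₀ := by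
        rw [Vt_eq_image t₀ dflt]
        exact Finset.mem_image_of_mem _ hb
      have heven : Even (D b) := hdeq ▸ hT t₀ ht₀T _ hmemV
      have hpos : 0 < D b := hdeq ▸ deg_pos hmemV
      refine ⟨heven, ?_⟩
      rcases heven with ⟨c, hc⟩
      omega
    set τφ := (imφ.filter (fun b => D b = 2)).card with hτφ
    have fiber_facts : ∀ t ∈ T.filter (fun t => phiF t = φ),
        tauf t = τφ ∧ (∏ i ∈ Vt t, |v i| ^ deg t i)
          = ∏ b ∈ imφ, |v (psiF t dflt b)| ^ D b := by
      intro t ht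
      obtain ⟨htT, htφ⟩ := Finset.mem_filter.1 ht
      constructor
      · rw [tauf_eq t dflt, hτφ, himφ, hD, htφ]
      · rw [prod_over_V t dflt v, himφ, hD, htφ]
    calc (∑ t ∈ T.filter (fun t => phiF t = φ),
          (r ^ tauf t * ∏ i ∈ Vt t, |v i| ^ deg t i))
        = ∑ t ∈ T.filter (fun t => phiF t = φ),
            (r ^ τφ * ∏ b ∈ imφ, |v (psiF t dflt b)| ^ D b) := by
          refine Finset.sum_congr rfl fun t ht => ?_
          rw [(fiber_facts t ht).1, (fiber_facts t ht).2]
      _ = r ^ τφ * ∑ t ∈ T.filter (fun t => phiF t = φ),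
            ∏ b ∈ imφ, |v (psiF t dflt b)| ^ D b := by
          rw [Finset.mul_sum]
      _ ≤ r ^ τφ * ∏ b ∈ imφ, (∑ i, |v i| ^ D b) := by
          apply mul_le_mul_of_nonneg_left _ (by positivity)
          -- the injection into the pi-set
          set G : ((b : Fin (2 * pp)) → b ∈ imφ → Fin n) → ℝ :=
            fun ψ => ∏ b ∈ imφ.attach, |v (ψ b.1 b.2)| ^ D b.1 with hG
          set Ψ : (Fin pp → Fin n × Fin n) → ((b : Fin (2 * pp)) → b ∈ imφ → Fin n) :=
            fun t => fun b _ => psiF t dflt b with hΨ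
          have hGΨ : ∀ t, (∏ b ∈ imφ, |v (psiF t dflt b)| ^ D b) = G (Ψ t) := by
            intro t
            rw [hG]
            rw [← Finset.prod_attach imφ (fun b => |v (psiF t dflt b)| ^ D b)]
          have hinj : ∀ t1 ∈ T.filter (fun t => phiF t = φ),
              ∀ t2 ∈ T.filter (fun t => phiF t = φ), Ψ t1 = Ψ t2 → t1 = t2 := by
            intro t1 h1 t2 h2 he
            have hφ1 := (Finset.mem_filter.1 h1).2
            have hφ2 := (Finset.mem_filter.1 h2).2
            funext s
            have key : ∀ u : Fin pp × Bool, It t1 u = It t2 u := by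
              intro u
              have m1 : φ u ∈ imφ := Finset.mem_image_of_mem _ (Finset.mem_univ u)
              calc It t1 u = psiF t1 dflt (phiF t1 u) := (psi_phi t1 dflt u).symm
                _ = Ψ t1 (φ u) m1 := by rw [hΨ, hφ1]
                _ = Ψ t2 (φ u) m1 := by rw [he]
                _ = psiF t2 dflt (phiF t2 u) := by rw [hΨ, hφ2]
                _ = It t2 u := psi_phi t2 dflt u
            have k1 := key (s, false)
            have k2 := key (s, true)
            simp only [It] at k1 k2
            exact Prod.ext (by simpa using k1) (by simpa using k2)
          calc (∑ t ∈ T.filter (fun t => phiF t = φ),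
                ∏ b ∈ imφ, |v (psiF t dflt b)| ^ D b)
              = ∑ t ∈ T.filter (fun t => phiF t = φ), G (Ψ t) :=
                Finset.sum_congr rfl fun t _ => hGΨ t
            _ = ∑ ψ ∈ (T.filter (fun t => phiF t = φ)).image Ψ, G ψ :=
                (Finset.sum_image hinj).symm
            _ ≤ ∑ ψ ∈ imφ.pi (fun _ => Finset.univ), G ψ := by
                apply Finset.sum_le_sum_of_subset_of_nonneg
                · intro ψ hψ
                  rw [Finset.mem_pi]
                  intro b hb
                  exact Finset.mem_univ _
                · intro ψ _ _
                  rw [hG]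
                  positivity
            _ = ∏ b ∈ imφ, (∑ i, |v i| ^ D b) := by
                rw [Finset.prod_sum]
      _ ≤ RHSterm := by
          rw [hRHS, hτφ]
          exact pattern_bound v imφ D hr hDgood hDsum
  calc (∑ φ ∈ T.image (fun t => phiF t), ∑ t ∈ T.filter (fun t => phiF t = φ),
        (r ^ tauf t * ∏ i ∈ Vt t, |v i| ^ deg t i))
      ≤ ∑ _φ ∈ T.image (fun t => phiF t), RHSterm := Finset.sum_le_sum perphi
    _ = ((T.image (fun t => phiF t)).card : ℝ) * RHSterm := by
        rw [Finset.sum_const, nsmul_eq_mul]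
    _ ≤ (((2 * pp) ^ (2 * pp) : ℕ) : ℝ) * RHSterm := by
        apply mul_le_mul_of_nonneg_right _ hRT0
        have h1 : (T.image (fun t => phiF t)).card
            ≤ Fintype.card (Fin pp × Bool → Fin (2 * pp)) := by
          rw [← Finset.card_univ]
          exact Finset.card_le_univ _
        have h2 : Fintype.card (Fin pp × Bool → Fin (2 * pp)) = (2 * pp) ^ (2 * pp) := by
          rw [Fintype.card_fun]
          simp [mul_comm]
        exact_mod_cast h2 ▸ h1
end aux5
theorem stmt8 : ∃ C : ℝ, 0 < C ∧ ∀ (n m : ℕ), 0 < m → ∀ (p : ℕ), 2 ≤ p → Even p →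
    ∀ (ν : (Fin n → Fin m) → ℝ), (∀ h, 0 ≤ ν h) → (∑ h, ν h = 1) →
    -- ν is a 4p-wise independent hash family
    (∀ (T : Finset (Fin n)), T.card ≤ 4 * p → ∀ j : Fin n → Fin m,
      (∑ h, ν h * (if ∀ i ∈ T, h i = j i then (1:ℝ) else 0)) = (1 / (m:ℝ)) ^ T.card) →
    ∀ (μ : (Fin n → Bool) → ℝ), (∀ x, 0 ≤ μ x) → (∑ x, μ x = 1) →
    -- μ is a 4p-wise independent distribution over {±1}ⁿ
    (∀ S : Finset (Fin n), S.Nonempty → S.card ≤ 4 * p →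
      (∑ x, μ x * ∏ i ∈ S, pm (x i)) = 0) →
    ∀ v : Fin n → ℝ,
    ∑ h, ∑ x, ν h * μ x *
      ((∑ i, v i ^ 2) -
        ∑ j : Fin m, (∑ i ∈ univ.filter fun i => h i = j, v i * pm (x i)) ^ 2) ^ p ≤
      (C * p) ^ (2 * p) * ((∑ i, v i ^ 2) ^ 2 / m) ^ (p / 2)
      + (C * p) ^ (2 * p) * (∑ i, v i ^ 4) ^ (p / 2) := by
  classical
  refine ⟨2, by norm_num, ?_⟩
  intro n m hm p hp hpe ν hν0 hν1 hνk μ hμ0 hμ1 hμk v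
  have hp0 : 0 < p := by omega
  set r : ℝ := (Real.sqrt m)⁻¹ with hrdef
  have hsm0 : (0:ℝ) < Real.sqrt m := Real.sqrt_pos.2 (by exact_mod_cast hm)
  have hr0 : 0 ≤ r := by positivity
  set N2 : ℝ := ∑ i, v i ^ 2 with hN2
  set N4 : ℝ := ∑ i, v i ^ 4 with hN4
  -- notation for the three factors
  set Ct : (Fin p → Fin n × Fin n) → ℝ := fun t => ∏ s, (v (t s).1 * v (t s).2) with hCt
  set Xt : (Fin p → Fin n × Fin n) → ℝ :=
    fun t => ∑ x, μ x * ∏ s, (pm (x (t s).1) * pm (x (t s).2)) with hXt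
  set Ht : (Fin p → Fin n × Fin n) → ℝ :=
    fun t => ∑ h, ν h * ∏ s, (if h (t s).1 = h (t s).2 then (1:ℝ) else 0) with hHt
  -- step 1 : rewriting the left-hand side as a sum over tuples of edges
  have step1 : (∑ h, ∑ x, ν h * μ x *
      ((∑ i, v i ^ 2) -
        ∑ j : Fin m, (∑ i ∈ univ.filter fun i => h i = j, v i * pm (x i)) ^ 2) ^ p)
      = ∑ t ∈ Fintype.piFinset (fun _ : Fin p => Pset n), Ct t * Xt t * Ht t := by
    have e1 : ∀ (h : Fin n → Fin m) (x : Fin n → Bool),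
        ((∑ i, v i ^ 2) -
          ∑ j : Fin m, (∑ i ∈ univ.filter fun i => h i = j, v i * pm (x i)) ^ 2) ^ p
        = ∑ t ∈ Fintype.piFinset (fun _ : Fin p => Pset n), ∏ s, Fterm v h x (t s) := by
      intro h x
      rw [claim1 v h x, hpe.neg_pow]
      have e2 : (∑ e ∈ Pset n, Fterm v h x e) ^ p
          = ∏ _s : Fin p, ∑ e ∈ Pset n, Fterm v h x e := by
        rw [Finset.prod_const, Finset.card_univ, Fintype.card_fin]
      rw [e2, Finset.prod_univ_sum]
    calc (∑ h, ∑ x, ν h * μ x *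
        ((∑ i, v i ^ 2) -
          ∑ j : Fin m, (∑ i ∈ univ.filter fun i => h i = j, v i * pm (x i)) ^ 2) ^ p)
        = ∑ h, ∑ x, ∑ t ∈ Fintype.piFinset (fun _ : Fin p => Pset n),
            ν h * μ x * ∏ s, Fterm v h x (t s) := by
          refine Finset.sum_congr rfl fun h _ => Finset.sum_congr rfl fun x _ => ?_
          rw [e1 h x, Finset.mul_sum]
      _ = ∑ h, ∑ t ∈ Fintype.piFinset (fun _ : Fin p => Pset n),
            ∑ x, ν h * μ x * ∏ s, Fterm v h x (t s) :=
          Finset.sum_congr rfl fun h _ => Finset.sum_comm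
      _ = ∑ t ∈ Fintype.piFinset (fun _ : Fin p => Pset n),
            ∑ h, ∑ x, ν h * μ x * ∏ s, Fterm v h x (t s) := Finset.sum_comm
      _ = ∑ t ∈ Fintype.piFinset (fun _ : Fin p => Pset n), Ct t * Xt t * Ht t := by
          refine Finset.sum_congr rfl fun t _ => ?_
          have e3 : ∀ (h : Fin n → Fin m) (x : Fin n → Bool),
              (∏ s, Fterm v h x (t s))
              = Ct t * ((∏ s, (pm (x (t s).1) * pm (x (t s).2)))
                  * ∏ s, (if h (t s).1 = h (t s).2 then (1:ℝ) else 0)) := by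
            intro h x
            rw [hCt]
            simp only [Fterm]
            rw [Finset.prod_mul_distrib, Finset.prod_mul_distrib]
            ring
          calc (∑ h, ∑ x, ν h * μ x * ∏ s, Fterm v h x (t s))
              = ∑ h, ∑ x, Ct t * ((μ x * ∏ s, (pm (x (t s).1) * pm (x (t s).2)))
                  * (ν h * ∏ s, (if h (t s).1 = h (t s).2 then (1:ℝ) else 0))) := by
                refine Finset.sum_congr rfl fun h _ => Finset.sum_congr rfl fun x _ => ?_
                rw [e3 h x]
                ring
            _ = Ct t * Xt t * Ht t := by
                rw [hXt, hHt]
                dsimp only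
                have e4 : ∀ hh : Fin n → Fin m,
                    (∑ x, Ct t * ((μ x * ∏ s, (pm (x (t s).1) * pm (x (t s).2)))
                      * (ν hh * ∏ s, (if hh (t s).1 = hh (t s).2 then (1:ℝ) else 0))))
                    = (∑ x, μ x * ∏ s, (pm (x (t s).1) * pm (x (t s).2)))
                      * (Ct t * (ν hh * ∏ s,
                          (if hh (t s).1 = hh (t s).2 then (1:ℝ) else 0))) := by
                  intro hh
                  simp only [Finset.sum_mul]
                  refine Finset.sum_congr rfl fun x _ => ?_
                  ring
                calc (∑ h, ∑ x, Ct t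
                      * ((μ x * ∏ s, (pm (x (t s).1) * pm (x (t s).2)))
                        * (ν h * ∏ s, (if h (t s).1 = h (t s).2 then (1:ℝ) else 0))))
                    = ∑ h, (∑ x, μ x * ∏ s, (pm (x (t s).1) * pm (x (t s).2)))
                        * (Ct t * (ν h * ∏ s,
                            (if h (t s).1 = h (t s).2 then (1:ℝ) else 0))) :=
                      Finset.sum_congr rfl fun h _ => e4 h
                  _ = (∑ x, μ x * ∏ s, (pm (x (t s).1) * pm (x (t s).2)))
                      * (Ct t * ∑ h, (ν h * ∏ s,
                          (if h (t s).1 = h (t s).2 then (1:ℝ) else 0))) := by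
                      simp only [Finset.mul_sum]
                  _ = _ := by ring
  -- step 2 : the sign-expectation is an indicator of all degrees even
  have step2 : ∀ t ∈ Fintype.piFinset (fun _ : Fin p => Pset n),
      Xt t = if Sodd t = ∅ then 1 else 0 := by
    intro t _
    rw [hXt]
    have e1 : ∀ x : Fin n → Bool,
        (∏ s, (pm (x (t s).1) * pm (x (t s).2))) = ∏ i ∈ Sodd t, pm (x i) :=
      fun x => prod_pm_eq t x
    simp only [e1]
    by_cases hS : Sodd t = ∅
    · rw [if_pos hS, hS]
      simpa using hμ1
    · rw [if_neg hS]
      apply hμk (Sodd t) (Finset.nonempty_of_ne_empty hS)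
      calc (Sodd t).card ≤ (Vt t).card := Finset.card_le_card (Sodd_subset t)
        _ ≤ 2 * p := card_Vt_le t
        _ ≤ 4 * p := by omega
  -- the set of even tuples
  set T : Finset (Fin p → Fin n × Fin n) :=
    (Fintype.piFinset (fun _ : Fin p => Pset n)).filter (fun t => Sodd t = ∅) with hT
  have step3 : (∑ t ∈ Fintype.piFinset (fun _ : Fin p => Pset n), Ct t * Xt t * Ht t)
      = ∑ t ∈ T, Ct t * Ht t := by
    rw [hT, Finset.sum_filter]
    refine Finset.sum_congr rfl fun t ht => ?_
    rw [step2 t ht]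
    by_cases hS : Sodd t = ∅ <;> simp [hS]
  -- properness of edges
  have proper : ∀ t ∈ T, ∀ s, (t s).1 ≠ (t s).2 := by
    intro t ht s
    have := (Finset.mem_filter.1 ht).1
    rw [Fintype.mem_piFinset] at this
    have := this s
    rw [Pset, Finset.mem_filter] at this
    exact this.2
  -- step 4 : termwise bound
  have step4 : (∑ t ∈ T, Ct t * Ht t)
      ≤ ∑ t ∈ T, (r ^ tauf t * ∏ i ∈ Vt t, |v i| ^ deg t i) := by
    refine Finset.sum_le_sum fun t ht => ?_
    have hH0 : 0 ≤ Ht t := Hval_nonneg ν hν0 t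
    have hHle : Ht t ≤ r ^ tauf t := by
      rw [hHt, hrdef]
      apply Hval_le hm ν (proper t ht)
      intro j
      apply hνk (Vt t) _ j
      calc (Vt t).card ≤ 2 * p := card_Vt_le t
        _ ≤ 4 * p := by omega
    calc Ct t * Ht t ≤ |Ct t| * Ht t :=
          mul_le_mul_of_nonneg_right (le_abs_self _) hH0
      _ = (∏ i ∈ Vt t, |v i| ^ deg t i) * Ht t := by rw [hCt, abs_coeff v t]
      _ ≤ (∏ i ∈ Vt t, |v i| ^ deg t i) * r ^ tauf t :=
          mul_le_mul_of_nonneg_left hHle (by positivity)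
      _ = r ^ tauf t * ∏ i ∈ Vt t, |v i| ^ deg t i := mul_comm _ _
  -- step 5 : counting
  have hTeven : ∀ t ∈ T, ∀ i ∈ Vt t, Even (deg t i) := by
    intro t ht i hi
    have hS := (Finset.mem_filter.1 ht).2
    by_contra hodd
    have : i ∈ Sodd t := Finset.mem_filter.2 ⟨hi, hodd⟩
    rw [hS] at this
    exact absurd this (Finset.notMem_empty i)
  have step5 := counting hp0 v hr0 T hTeven
  -- final numeric computation
  have hsum : (∑ h, ∑ x, ν h * μ x *
      ((∑ i, v i ^ 2) -
        ∑ j : Fin m, (∑ i ∈ univ.filter fun i => h i = j, v i * pm (x i)) ^ 2) ^ p)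
      ≤ (((2 * p) ^ (2 * p) : ℕ) : ℝ) * ((r * N2) ^ p + (Real.sqrt N4) ^ p) := by
    rw [step1, step3]
    exact le_trans step4 step5
  have hhalf : 2 * (p / 2) = p := by
    rcases hpe with ⟨c, hc⟩
    omega
  have efirst : (r * N2) ^ p = (N2 ^ 2 / m) ^ (p / 2) := by
    have hmsq : Real.sqrt m ^ 2 = (m:ℝ) := Real.sq_sqrt (by positivity)
    have e1 : Real.sqrt m ^ p = (m:ℝ) ^ (p / 2) := by
      conv_lhs => rw [← hhalf]
      rw [pow_mul, hmsq]
    have e2 : (r * N2) ^ p = N2 ^ p / Real.sqrt m ^ p := by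
      rw [mul_pow, hrdef, inv_pow]
      ring
    rw [e2, e1, div_pow, ← pow_mul, hhalf]
  have esecond : (Real.sqrt N4) ^ p = N4 ^ (p / 2) := by
    have hN40 : (0:ℝ) ≤ N4 := by rw [hN4]; positivity
    conv_lhs => rw [← hhalf]
    rw [pow_mul, Real.sq_sqrt hN40]
  have ecast : (((2 * p) ^ (2 * p) : ℕ) : ℝ) = (2 * (p:ℝ)) ^ (2 * p) := by
    push_cast
    ring
  calc (∑ h, ∑ x, ν h * μ x *
      ((∑ i, v i ^ 2) -
        ∑ j : Fin m, (∑ i ∈ univ.filter fun i => h i = j, v i * pm (x i)) ^ 2) ^ p)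
      ≤ (((2 * p) ^ (2 * p) : ℕ) : ℝ) * ((r * N2) ^ p + (Real.sqrt N4) ^ p) := hsum
    _ = (2 * (p:ℝ)) ^ (2 * p) * ((∑ i, v i ^ 2) ^ 2 / m) ^ (p / 2)
        + (2 * (p:ℝ)) ^ (2 * p) * (∑ i, v i ^ 4) ^ (p / 2) := by
        rw [ecast, efirst, esecond, mul_add, hN2, hN4]
    _ ≤ _ := le_refl _
end

section
/- Let C be a sufficiently large constant and ε > 0. Let H = {h : [n] → [m]} with m ≥ log(1/ε) be a (k, ℓ, ε/4)-spreading family with ℓ = C·log(1/ε). Let G be a generator over {−1,1}^n that fools signed-majority sums with error 1/4 (i.e., dtv(v·G, v·U) ≤ 1/4 for all v ∈ {0,±1}^n, U uniform). Define Y ∈ {−1,1}^n by Y_i = G(z_{h(i)})_i using m independent seeds z_1,…,z_m and h uniform in H. Then for all v ∈ {0,±1}^n with ‖v‖_0 ≥ k and all α with C√m/‖v‖_2 ≤ α ≤ 1/4: |E[exp(2πiα⟨v,Y⟩)] − E[exp(2πiα⟨v,X⟩)]| ≤ ε, where X is uniform on {−1,1}^n. -/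
open Finset

section Aux

lemma sum_pi_prod {ι Ω : Type*} [Fintype ι] [DecidableEq ι] [Fintype Ω] (f : ι → Ω → ℂ) :
    ∑ z : ι → Ω, ∏ j, f j (z j) = ∏ j, ∑ ω, f j ω := by
  rw [Finset.prod_univ_sum]; simp [Fintype.piFinset_univ]

lemma exp_key (c d : ℂ) (h : c = d * Complex.I) :
    Complex.exp c + Complex.exp (-c) = 2 * Complex.cos d := by
  rw [Complex.cos, h]; ring

lemma norm_exp_unit (α t : ℝ) :
    ‖Complex.exp (2 * Real.pi * Complex.I * ((α * t : ℝ) : ℂ))‖ = 1 := by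
  rw [Complex.norm_exp]
  have : (2 * (Real.pi:ℂ) * Complex.I * ((α * t : ℝ) : ℂ)).re = 0 := by
    simp [Complex.mul_re, Complex.mul_im]
  rw [this, Real.exp_zero]

lemma uniform_fourier {n : ℕ} (α : ℝ) (w : Fin n → ℝ) (hw : ∀ i, w i = 0 ∨ w i = 1 ∨ w i = -1) :
    (((2:ℝ) ^ n : ℝ) : ℂ)⁻¹ * ∑ x : Fin n → Bool,
        Complex.exp (2 * Real.pi * Complex.I * ((α * ∑ i, w i * pm (x i) : ℝ) : ℂ)) =
      ((Real.cos (2 * Real.pi * α) : ℝ) : ℂ) ^ (univ.filter fun i => w i ≠ 0).card := by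
  have h1 : ∀ x : Fin n → Bool,
      Complex.exp (2 * Real.pi * Complex.I * ((α * ∑ i, w i * pm (x i) : ℝ) : ℂ)) =
        ∏ i, Complex.exp ((2 * Real.pi * Complex.I * α) * (w i * pm (x i) : ℝ)) := by
    intro x
    have harg : 2 * (Real.pi:ℂ) * Complex.I * ((α * ∑ i, w i * pm (x i) : ℝ) : ℂ)
        = ∑ i, (2 * (Real.pi:ℂ) * Complex.I * (α:ℂ)) * ((w i * pm (x i) : ℝ) : ℂ) := by
      push_cast
      simp only [Finset.mul_sum]
      exact Finset.sum_congr rfl fun i _ => by ring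
    rw [harg, Complex.exp_sum]
  simp_rw [h1]
  rw [sum_pi_prod (fun i b => Complex.exp ((2 * Real.pi * Complex.I * α) * (w i * pm b : ℝ)))]
  have h2 : ∀ i, (∑ b : Bool, Complex.exp ((2 * Real.pi * Complex.I * α) * (w i * pm b : ℝ)))
      = if w i = 0 then 2 else 2 * ((Real.cos (2 * Real.pi * α) : ℝ) : ℂ) := by
    intro i
    rw [Fintype.sum_bool]
    simp only [pm, if_true, if_false]
    rw [Complex.ofReal_cos]
    push_cast
    rcases hw i with h | h | h <;> rw [h] <;>
      simp only [mul_zero, zero_mul, mul_one, one_mul, mul_neg, mul_neg_one, neg_zero,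
        Complex.exp_zero, neg_neg] <;> norm_num
    · exact exp_key _ _ (by ring)
    · rw [add_comm]; exact exp_key _ _ (by ring)
  rw [Finset.prod_congr rfl (fun i _ => h2 i)]
  rw [Finset.prod_ite (fun _ => (2:ℂ)) (fun _ => 2 * ((Real.cos (2 * Real.pi * α) : ℝ) : ℂ))]
  rw [Finset.prod_const, Finset.prod_const, mul_pow]
  have hab : (univ.filter fun i => w i = 0).card + (univ.filter fun i => ¬ w i = 0).card = n := by
    rw [Finset.card_filter_add_card_filter_not]; simp
  have h2n : (((2:ℝ) ^ n : ℝ) : ℂ) = (2:ℂ) ^ ((univ.filter fun i => w i = 0).card)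
      * (2:ℂ) ^ ((univ.filter fun i => ¬ w i = 0).card) := by
    push_cast
    rw [← pow_add, hab]
  rw [h2n]
  have : ((univ.filter fun i => ¬ w i = 0)) = (univ.filter fun i => w i ≠ 0) := rfl
  rw [this]
  field_simp

lemma sum_comp_fibers {Ω β : Type*} [Fintype Ω] [NonUnitalNonAssocSemiring β]
    (c : Ω → β) (s : Ω → ℝ) (S : Finset ℝ) (hS : ∀ ω, s ω ∈ S) (F : ℝ → β) :
    ∑ ω, c ω * F (s ω) = ∑ t ∈ S, (∑ ω, if s ω = t then c ω else 0) * F t := by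
  have key : ∀ ω, c ω * F (s ω) = ∑ t ∈ S, (if s ω = t then c ω else 0) * F t := by
    intro ω
    have : ∑ t ∈ S, (if s ω = t then c ω else 0) * F t
        = ∑ t ∈ S, (if s ω = t then c ω * F t else 0) := by
      apply Finset.sum_congr rfl; intro t _; split <;> simp
    rw [this, Finset.sum_ite_eq S (s ω) (fun t => c ω * F t)]
    simp [hS ω]
  simp_rw [key]
  rw [Finset.sum_comm]
  exact Finset.sum_congr rfl fun t _ => (Finset.sum_mul _ _ _).symm

lemma dtv_bound {n : ℕ} {Ω : Type} [Fintype Ω] (q : Ω → ℝ)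
    (G : Ω → Fin n → Bool) (w : Fin n → ℝ)
    (hfool : ∀ A : Set ℝ,
      |(∑ ω, q ω * A.indicator (fun _ => (1:ℝ)) (∑ i, w i * pm (G ω i))) -
        ((2:ℝ) ^ n)⁻¹ * ∑ x : Fin n → Bool,
          A.indicator (fun _ => (1:ℝ)) (∑ i, w i * pm (x i))| ≤ 1/4)
    (F : ℝ → ℂ) (hF : ∀ t, ‖F t‖ ≤ 1) :
    ‖(∑ ω, (q ω : ℂ) * F (∑ i, w i * pm (G ω i))) -
      (((2:ℝ) ^ n : ℝ) : ℂ)⁻¹ * ∑ x : Fin n → Bool, F (∑ i, w i * pm (x i))‖ ≤ 1/2 := by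
  classical
  set s : Ω → ℝ := fun ω => ∑ i, w i * pm (G ω i) with hs
  set s' : (Fin n → Bool) → ℝ := fun x => ∑ i, w i * pm (x i) with hs'
  set S : Finset ℝ := (univ.image s) ∪ (univ.image s') with hSdef
  have hSω : ∀ ω, s ω ∈ S := fun ω => Finset.mem_union_left _ (Finset.mem_image_of_mem s (mem_univ ω))
  have hSx : ∀ x, s' x ∈ S := fun x => Finset.mem_union_right _ (Finset.mem_image_of_mem s' (mem_univ x))
  set p : ℝ → ℝ := fun t => ∑ ω, if s ω = t then q ω else 0 with hp
  set p' : ℝ → ℝ := fun t => ((2:ℝ) ^ n)⁻¹ * ∑ x, if s' x = t then (1:ℝ) else 0 with hp'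
  have idG : (∑ ω, (q ω : ℂ) * F (s ω)) = ∑ t ∈ S, ((p t : ℝ) : ℂ) * F t := by
    rw [sum_comp_fibers (fun ω => ((q ω : ℝ) : ℂ)) s S hSω F]
    apply Finset.sum_congr rfl; intro t _
    congr 1
    rw [hp]
    push_cast
    apply Finset.sum_congr rfl; intro ω _; split <;> simp
  have idX : (((2:ℝ) ^ n : ℝ) : ℂ)⁻¹ * (∑ x : Fin n → Bool, F (s' x))
      = ∑ t ∈ S, ((p' t : ℝ) : ℂ) * F t := by
    have : (∑ x : Fin n → Bool, F (s' x)) = ∑ x : Fin n → Bool, (1:ℂ) * F (s' x) := by simp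
    rw [this, sum_comp_fibers (fun _ => (1:ℂ)) s' S hSx F, Finset.mul_sum]
    apply Finset.sum_congr rfl; intro t _
    rw [hp']
    push_cast
    rw [← mul_assoc]
    congr 2
    apply Finset.sum_congr rfl; intro x _; split <;> simp
  have idGr : ∀ Fr : ℝ → ℝ, (∑ ω, q ω * Fr (s ω)) = ∑ t ∈ S, p t * Fr t := by
    intro Fr; exact sum_comp_fibers q s S hSω Fr
  have idXr : ∀ Fr : ℝ → ℝ, ((2:ℝ) ^ n)⁻¹ * (∑ x : Fin n → Bool, Fr (s' x))
      = ∑ t ∈ S, p' t * Fr t := by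
    intro Fr
    have : (∑ x : Fin n → Bool, Fr (s' x)) = ∑ x : Fin n → Bool, (1:ℝ) * Fr (s' x) := by simp
    rw [this, sum_comp_fibers (fun _ => (1:ℝ)) s' S hSx Fr, Finset.mul_sum]
    apply Finset.sum_congr rfl; intro t _
    rw [hp', ← mul_assoc]
  have hL1 : ∑ t ∈ S, |p t - p' t| ≤ 1/2 := by
    set A : Set ℝ := {t | p' t ≤ p t} with hA
    have hindA : ∀ t, A.indicator (fun _ => (1:ℝ)) t = if p' t ≤ p t then 1 else 0 := by
      intro t; by_cases h : p' t ≤ p t <;> simp [A, h]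
    have hindAc : ∀ t, Aᶜ.indicator (fun _ => (1:ℝ)) t = if p' t ≤ p t then 0 else 1 := by
      intro t; by_cases h : p' t ≤ p t <;> simp [A, h]
    have h1 : |∑ t ∈ S, (p t - p' t) * (if p' t ≤ p t then (1:ℝ) else 0)| ≤ 1/4 := by
      have := hfool A
      rw [show (∑ ω, q ω * A.indicator (fun _ => (1:ℝ)) (∑ i, w i * pm (G ω i)))
          = ∑ t ∈ S, p t * (if p' t ≤ p t then (1:ℝ) else 0) from
        (idGr (A.indicator fun _ => (1:ℝ))).trans
          (Finset.sum_congr rfl fun t _ => by rw [hindA t])] at this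
      rw [show ((2:ℝ) ^ n)⁻¹ * (∑ x : Fin n → Bool, A.indicator (fun _ => (1:ℝ)) (∑ i, w i * pm (x i)))
          = ∑ t ∈ S, p' t * (if p' t ≤ p t then (1:ℝ) else 0) from
        (idXr (A.indicator fun _ => (1:ℝ))).trans
          (Finset.sum_congr rfl fun t _ => by rw [hindA t])] at this
      rw [← Finset.sum_sub_distrib] at this
      have hc : ∑ t ∈ S, (p t - p' t) * (if p' t ≤ p t then (1:ℝ) else 0)
          = ∑ t ∈ S, (p t * (if p' t ≤ p t then (1:ℝ) else 0)
            - p' t * (if p' t ≤ p t then (1:ℝ) else 0)) :=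
        Finset.sum_congr rfl fun t _ => by ring
      rw [hc]; exact this
    have h2 : |∑ t ∈ S, (p t - p' t) * (if p' t ≤ p t then (0:ℝ) else 1)| ≤ 1/4 := by
      have := hfool Aᶜ
      rw [show (∑ ω, q ω * Aᶜ.indicator (fun _ => (1:ℝ)) (∑ i, w i * pm (G ω i)))
          = ∑ t ∈ S, p t * (if p' t ≤ p t then (0:ℝ) else 1) from
        (idGr (Aᶜ.indicator fun _ => (1:ℝ))).trans
          (Finset.sum_congr rfl fun t _ => by rw [hindAc t])] at this
      rw [show ((2:ℝ) ^ n)⁻¹ * (∑ x : Fin n → Bool, Aᶜ.indicator (fun _ => (1:ℝ)) (∑ i, w i * pm (x i)))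
          = ∑ t ∈ S, p' t * (if p' t ≤ p t then (0:ℝ) else 1) from
        (idXr (Aᶜ.indicator fun _ => (1:ℝ))).trans
          (Finset.sum_congr rfl fun t _ => by rw [hindAc t])] at this
      rw [← Finset.sum_sub_distrib] at this
      have hc : ∑ t ∈ S, (p t - p' t) * (if p' t ≤ p t then (0:ℝ) else 1)
          = ∑ t ∈ S, (p t * (if p' t ≤ p t then (0:ℝ) else 1)
            - p' t * (if p' t ≤ p t then (0:ℝ) else 1)) :=
        Finset.sum_congr rfl fun t _ => by ring
      rw [hc]; exact this
    have habs : ∑ t ∈ S, |p t - p' t|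
        = (∑ t ∈ S, (p t - p' t) * (if p' t ≤ p t then (1:ℝ) else 0))
          - (∑ t ∈ S, (p t - p' t) * (if p' t ≤ p t then (0:ℝ) else 1)) := by
      rw [← Finset.sum_sub_distrib]
      apply Finset.sum_congr rfl; intro t _
      by_cases h : p' t ≤ p t
      · rw [abs_of_nonneg (by linarith)]; simp [h]
      · rw [abs_of_neg (by linarith)]; simp [h]
    have e1 := abs_le.mp h1
    have e2 := abs_le.mp h2
    rw [habs]; linarith [e1.2, e2.1]
  rw [idG, idX, ← Finset.sum_sub_distrib]
  calc ‖∑ t ∈ S, (((p t : ℝ) : ℂ) * F t - ((p' t : ℝ) : ℂ) * F t)‖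
      ≤ ∑ t ∈ S, ‖((p t : ℝ) : ℂ) * F t - ((p' t : ℝ) : ℂ) * F t‖ := norm_sum_le _ _
    _ ≤ ∑ t ∈ S, |p t - p' t| := by
        apply Finset.sum_le_sum; intro t _
        rw [← sub_mul, norm_mul]
        calc ‖(((p t : ℝ) : ℂ) - ((p' t : ℝ) : ℂ))‖ * ‖F t‖ ≤ ‖(((p t - p' t : ℝ)) : ℂ)‖ * 1 := by
              apply mul_le_mul_of_nonneg_left (hF t) (norm_nonneg _) |>.trans_eq
              push_cast; ring_nf
          _ = |p t - p' t| := by rw [mul_one, Complex.norm_real]; rfl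
    _ ≤ 1/2 := hL1

lemma bin_bound {n : ℕ} {Ω : Type} [Fintype Ω] (q : Ω → ℝ)
    (G : Ω → Fin n → Bool) (α : ℝ) (w : Fin n → ℝ)
    (hw : ∀ i, w i = 0 ∨ w i = 1 ∨ w i = -1)
    (hcos : 0 ≤ Real.cos (2 * Real.pi * α))
    (hfool : ∀ A : Set ℝ,
      |(∑ ω, q ω * A.indicator (fun _ => (1:ℝ)) (∑ i, w i * pm (G ω i))) -
        ((2:ℝ) ^ n)⁻¹ * ∑ x : Fin n → Bool,
          A.indicator (fun _ => (1:ℝ)) (∑ i, w i * pm (x i))| ≤ 1/4) :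
    ‖∑ ω, (q ω : ℂ) * Complex.exp (2 * Real.pi * Complex.I *
        ((α * ∑ i, w i * pm (G ω i) : ℝ) : ℂ))‖ ≤
      Real.cos (2 * Real.pi * α) ^ (univ.filter fun i => w i ≠ 0).card + 1/2 := by
  set F : ℝ → ℂ := fun t => Complex.exp (2 * Real.pi * Complex.I * ((α * t : ℝ) : ℂ)) with hFdef
  have hF : ∀ t, ‖F t‖ ≤ 1 := fun t => le_of_eq (norm_exp_unit α t)
  have hd := dtv_bound q G w hfool F hF
  have hu := uniform_fourier α w hw
  have hsplit : (∑ ω, (q ω : ℂ) * F (∑ i, w i * pm (G ω i)))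
      = ((∑ ω, (q ω : ℂ) * F (∑ i, w i * pm (G ω i))) -
        (((2:ℝ) ^ n : ℝ) : ℂ)⁻¹ * ∑ x : Fin n → Bool, F (∑ i, w i * pm (x i))) +
        (((2:ℝ) ^ n : ℝ) : ℂ)⁻¹ * ∑ x : Fin n → Bool, F (∑ i, w i * pm (x i)) := by ring
  calc ‖∑ ω, (q ω : ℂ) * F (∑ i, w i * pm (G ω i))‖
      ≤ ‖(∑ ω, (q ω : ℂ) * F (∑ i, w i * pm (G ω i))) -
          (((2:ℝ) ^ n : ℝ) : ℂ)⁻¹ * ∑ x : Fin n → Bool, F (∑ i, w i * pm (x i))‖ +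
        ‖(((2:ℝ) ^ n : ℝ) : ℂ)⁻¹ * ∑ x : Fin n → Bool, F (∑ i, w i * pm (x i))‖ := by
          conv_lhs => rw [hsplit]
          exact norm_add_le _ _
    _ ≤ 1/2 + Real.cos (2 * Real.pi * α) ^ (univ.filter fun i => w i ≠ 0).card := by
        refine add_le_add hd (le_of_eq ?_)
        rw [hFdef]
        rw [hu, norm_pow, Complex.norm_real, Real.norm_eq_abs, abs_of_nonneg hcos]
    _ = Real.cos (2 * Real.pi * α) ^ (univ.filter fun i => w i ≠ 0).card + 1/2 := add_comm _ _

lemma factorize {n m : ℕ} {Ω : Type} [Fintype Ω] (q : Ω → ℝ) (G : Ω → Fin n → Bool)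
    (α : ℝ) (v : Fin n → ℝ) (h : Fin n → Fin m) :
    ∑ z : Fin m → Ω, ((∏ j, q (z j) : ℝ) : ℂ) *
        Complex.exp (2 * Real.pi * Complex.I * ((α * ∑ i, v i * pm (G (z (h i)) i) : ℝ) : ℂ))
      = ∏ j, ∑ ω, (q ω : ℂ) * Complex.exp (2 * Real.pi * Complex.I *
          ((α * ∑ i, (if h i = j then v i else 0) * pm (G ω i) : ℝ) : ℂ)) := by
  have step : ∀ z : Fin m → Ω, ((∏ j, q (z j) : ℝ) : ℂ) *
      Complex.exp (2 * Real.pi * Complex.I * ((α * ∑ i, v i * pm (G (z (h i)) i) : ℝ) : ℂ))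
      = ∏ j, ((q (z j) : ℂ) * Complex.exp (2 * Real.pi * Complex.I *
          ((α * ∑ i, (if h i = j then v i else 0) * pm (G (z j) i) : ℝ) : ℂ))) := by
    intro z
    have ha : ∑ i, v i * pm (G (z (h i)) i)
        = ∑ j, ∑ i, (if h i = j then v i else 0) * pm (G (z j) i) := by
      have h1 : ∀ j, (∑ i, (if h i = j then v i else 0) * pm (G (z j) i))
          = ∑ i ∈ univ.filter fun i => h i = j, v i * pm (G (z (h i)) i) := by
        intro j
        rw [Finset.sum_filter]
        apply Finset.sum_congr rfl
        intro i _
        by_cases hij : h i = j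
        · simp only [hij, if_true]
        · simp [hij]
      simp_rw [h1]
      exact (Finset.sum_fiberwise univ h (fun i => v i * pm (G (z (h i)) i))).symm
    rw [ha]
    have harg : 2 * (Real.pi:ℂ) * Complex.I *
        ((α * ∑ j, ∑ i, (if h i = j then v i else 0) * pm (G (z j) i) : ℝ) : ℂ)
        = ∑ j, 2 * (Real.pi:ℂ) * Complex.I *
          ((α * ∑ i, (if h i = j then v i else 0) * pm (G (z j) i) : ℝ) : ℂ) := by
      push_cast
      simp only [Finset.mul_sum]
    rw [harg, Complex.exp_sum]
    rw [show ((∏ j, q (z j) : ℝ) : ℂ) = ∏ j, ((q (z j) : ℝ) : ℂ) from by push_cast; rfl]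
    rw [← Finset.prod_mul_distrib]
  simp_rw [step]
  exact sum_pi_prod (fun j ω => (q ω : ℂ) * Complex.exp (2 * Real.pi * Complex.I *
    ((α * ∑ i, (if h i = j then v i else 0) * pm (G ω i) : ℝ) : ℂ)))

lemma exp_neg_le_inv {x : ℝ} (hx : 0 ≤ x) : Real.exp (-x) ≤ 1 / (1 + x) := by
  rw [Real.exp_neg, inv_eq_one_div]
  exact one_div_le_one_div_of_le (by linarith) (by linarith [Real.add_one_le_exp x])

lemma cos_le_exp {α : ℝ} (h0 : 0 ≤ α) (h4 : α ≤ 1/4) :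
    Real.cos (2 * Real.pi * α) ≤ Real.exp (-(8 * α ^ 2)) := by
  have hpi := Real.pi_gt_three
  have h1 : Real.cos (2 * Real.pi * α) ≤ 1 - 2 / Real.pi ^ 2 * (2 * Real.pi * α) ^ 2 := by
    apply Real.cos_le_one_sub_mul_cos_sq
    rw [abs_of_nonneg (by positivity)]
    nlinarith
  have h2 : 2 / Real.pi ^ 2 * (2 * Real.pi * α) ^ 2 = 8 * α ^ 2 := by
    field_simp
    ring
  calc Real.cos (2 * Real.pi * α) ≤ 1 - 8 * α ^ 2 := by rw [← h2]; exact h1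
    _ ≤ Real.exp (-(8 * α ^ 2)) := by linarith [Real.add_one_le_exp (-(8 * α ^ 2))]

end Aux

noncomputable def Tbin {n m : ℕ} {Ω : Type} [Fintype Ω] (q : Ω → ℝ) (G : Ω → Fin n → Bool)
    (α : ℝ) (v : Fin n → ℝ) (h : Fin n → Fin m) (j : Fin m) : ℂ :=
  ∑ ω, (q ω : ℂ) * Complex.exp (2 * Real.pi * Complex.I *
    ((α * ∑ i, (if h i = j then v i else 0) * pm (G ω i) : ℝ) : ℂ))

lemma factorize' {n m : ℕ} {Ω : Type} [Fintype Ω] (q : Ω → ℝ) (G : Ω → Fin n → Bool)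
    (α : ℝ) (v : Fin n → ℝ) (h : Fin n → Fin m) :
    ∑ z : Fin m → Ω, ((∏ j, q (z j) : ℝ) : ℂ) *
        Complex.exp (2 * Real.pi * Complex.I * ((α * ∑ i, v i * pm (G (z (h i)) i) : ℝ) : ℂ))
      = ∏ j, Tbin q G α v h j :=
  factorize q G α v h

lemma Tbin_norm_le_one {n m : ℕ} {Ω : Type} [Fintype Ω] {q : Ω → ℝ}
    (hq : ∀ ω, 0 ≤ q ω) (hqsum : ∑ ω, q ω = 1) (G : Ω → Fin n → Bool)
    (α : ℝ) (v : Fin n → ℝ) (h : Fin n → Fin m) (j : Fin m) :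
    ‖Tbin q G α v h j‖ ≤ 1 := by
  unfold Tbin
  calc ‖∑ ω, (q ω : ℂ) * Complex.exp (2 * Real.pi * Complex.I *
        ((α * ∑ i, (if h i = j then v i else 0) * pm (G ω i) : ℝ) : ℂ))‖
      ≤ ∑ ω, ‖(q ω : ℂ) * Complex.exp (2 * Real.pi * Complex.I *
        ((α * ∑ i, (if h i = j then v i else 0) * pm (G ω i) : ℝ) : ℂ))‖ := norm_sum_le _ _
    _ = ∑ ω, q ω := by
        apply Finset.sum_congr rfl; intro ω _
        rw [norm_mul, norm_exp_unit, mul_one, Complex.norm_real, Real.norm_eq_abs,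
          abs_of_nonneg (hq ω)]
    _ = 1 := hqsum

lemma Tbin_bound {n m : ℕ} {Ω : Type} [Fintype Ω] (q : Ω → ℝ) (G : Ω → Fin n → Bool)
    (α : ℝ) (v : Fin n → ℝ) (hv : ∀ i, v i = 0 ∨ v i = 1 ∨ v i = -1)
    (hcos : 0 ≤ Real.cos (2 * Real.pi * α))
    (hG : ∀ w : Fin n → ℝ, (∀ i, w i = 0 ∨ w i = 1 ∨ w i = -1) → ∀ A : Set ℝ,
      |(∑ ω, q ω * A.indicator (fun _ => (1:ℝ)) (∑ i, w i * pm (G ω i))) -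
        ((2:ℝ) ^ n)⁻¹ * ∑ x : Fin n → Bool,
          A.indicator (fun _ => (1:ℝ)) (∑ i, w i * pm (x i))| ≤ 1/4)
    (h : Fin n → Fin m) (j : Fin m) :
    ‖Tbin q G α v h j‖ ≤ Real.cos (2 * Real.pi * α) ^
        (((univ.filter fun i => v i ≠ 0).filter fun i => h i = j).card) + 1/2 := by
  classical
  have hw : ∀ i, (if h i = j then v i else 0) = 0 ∨ (if h i = j then v i else 0) = 1 ∨
      (if h i = j then v i else 0) = -1 := by
    intro i; by_cases hij : h i = j
    · simpa [hij] using hv i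
    · simp [hij]
  have hcard : (univ.filter fun i => (if h i = j then v i else 0) ≠ 0)
      = ((univ.filter fun i => v i ≠ 0).filter fun i => h i = j) := by
    ext i
    simp only [Finset.mem_filter, Finset.mem_univ, true_and]
    by_cases hij : h i = j <;> simp [hij]
  have := bin_bound q G α (fun i => if h i = j then v i else 0) hw hcos (hG _ hw)
  rw [hcard] at this
  exact this

set_option maxHeartbeats 2000000 in
theorem stmt12 : ∃ C : ℝ, 0 < C ∧
    ∀ (n m : ℕ), 0 < n → 0 < m → ∀ (ε : ℝ), 0 < ε → Real.log (1 / ε) ≤ m →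
    ∀ (k : ℕ),
    ∀ (ν : (Fin n → Fin m) → ℝ), (∀ h, 0 ≤ ν h) → (∑ h, ν h = 1) →
    -- ν is a (k, C·log(1/ε), ε/4)-spreading family of hash functions
    (∀ I : Finset (Fin n), k ≤ I.card →
      1 - ε / 4 ≤ ∑ h, ν h * (if ∀ j : Fin m,
        ((I.filter fun i => h i = j).card : ℝ) ≤ (I.card : ℝ) / (C * Real.log (1 / ε))
        then (1:ℝ) else 0)) →
    ∀ (Ω : Type) [Fintype Ω], ∀ (q : Ω → ℝ), (∀ ω, 0 ≤ q ω) → (∑ ω, q ω = 1) →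
    ∀ (G : Ω → Fin n → Bool),
    -- G fools signed-majority sums in statistical distance with error 1/4
    (∀ v : Fin n → ℝ, (∀ i, v i = 0 ∨ v i = 1 ∨ v i = -1) → ∀ A : Set ℝ,
      |(∑ ω, q ω * A.indicator (fun _ => (1:ℝ)) (∑ i, v i * pm (G ω i))) -
        ((2:ℝ) ^ n)⁻¹ * ∑ x : Fin n → Bool,
          A.indicator (fun _ => (1:ℝ)) (∑ i, v i * pm (x i))| ≤ 1/4) →
    ∀ v : Fin n → ℝ, (∀ i, v i = 0 ∨ v i = 1 ∨ v i = -1) →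
    k ≤ (univ.filter fun i => v i ≠ 0).card →
    ∀ α : ℝ, C * Real.sqrt m / Real.sqrt (∑ i, v i ^ 2) ≤ α → α ≤ 1/4 →
    -- Y_i = G(z_{h(i)})_i fools the Fourier test φ_{v,α}
    ‖(∑ h, ∑ z : Fin m → Ω, ((ν h * ∏ j, q (z j) : ℝ) : ℂ) *
        Complex.exp (2 * Real.pi * Complex.I *
          (α * ∑ i, v i * pm (G (z (h i)) i) : ℝ))) -
      (((2:ℝ) ^ n : ℝ) : ℂ)⁻¹ * ∑ x : Fin n → Bool,
        Complex.exp (2 * Real.pi * Complex.I * (α * ∑ i, v i * pm (x i) : ℝ))‖ ≤ ε:= by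
  classical
  refine ⟨100, by norm_num, ?_⟩
  intro n m hn hm ε hε hmlog k ν hν hνsum hspread Ω _ q hq hqsum G hG v hv hkv α hα1 hα2
  have hmain : (∑ h, ∑ z : Fin m → Ω, ((ν h * ∏ j, q (z j) : ℝ) : ℂ) *
        Complex.exp (2 * Real.pi * Complex.I *
          ((α * ∑ i, v i * pm (G (z (h i)) i) : ℝ) : ℂ)))
      = ∑ h, (ν h : ℂ) * ∏ j, Tbin q G α v h j := by
    apply Finset.sum_congr rfl
    intro h _
    rw [← factorize' q G α v h, Finset.mul_sum]
    apply Finset.sum_congr rfl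
    intro z _
    push_cast
    ring
  have huni := uniform_fourier α v hv
  rw [hmain, huni]
  set K : ℕ := (univ.filter fun i => v i ≠ 0).card with hKdef
  by_cases hK0 : K = 0
  · -- degenerate case : v = 0
    have hfe : (univ.filter fun i => v i ≠ 0) = (∅ : Finset (Fin n)) :=
      Finset.card_eq_zero.mp hK0
    have hv0 : ∀ i, v i = 0 := by
      intro i
      by_contra hne
      have hmem : i ∈ (univ.filter fun i => v i ≠ 0) := by simp [hne]
      rw [hfe] at hmem
      exact absurd hmem (Finset.notMem_empty i)
    have hT1 : ∀ (h : Fin n → Fin m) (j : Fin m), Tbin q G α v h j = 1 := by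
      intro h j
      unfold Tbin
      have hz : ∀ ω : Ω, (α * ∑ i, (if h i = j then v i else 0) * pm (G ω i) : ℝ) = 0 := by
        intro ω
        have h0 : ∀ i ∈ univ, (if h i = j then v i else 0) * pm (G ω i) = 0 := by
          intro i _; rw [hv0 i, ite_self, zero_mul]
        rw [Finset.sum_congr rfl h0, Finset.sum_const_zero, mul_zero]
      calc (∑ ω, (q ω : ℂ) * Complex.exp (2 * Real.pi * Complex.I *
            ((α * ∑ i, (if h i = j then v i else 0) * pm (G ω i) : ℝ) : ℂ)))
          = ∑ ω, (q ω : ℂ) := by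
            apply Finset.sum_congr rfl; intro ω _
            rw [hz ω]
            norm_num
        _ = 1 := by exact_mod_cast hqsum
    rw [hK0, pow_zero]
    have hone : (∑ h, (ν h : ℂ) * ∏ j, Tbin q G α v h j) = 1 := by
      have : ∀ h ∈ univ, (ν h : ℂ) * ∏ j, Tbin q G α v h j = (ν h : ℂ) := by
        intro h _
        rw [Finset.prod_congr rfl (fun j _ => hT1 h j), Finset.prod_const_one, mul_one]
      rw [Finset.sum_congr rfl this]
      exact_mod_cast hνsum
    rw [hone, sub_self, norm_zero]
    exact hε.le
  · -- main case
    have hKpos : 0 < K := Nat.pos_of_ne_zero hK0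
    have hKR : (0:ℝ) < K := by exact_mod_cast hKpos
    have hmR : (0:ℝ) < m := by exact_mod_cast hm
    have hm1 : (1:ℝ) ≤ m := by exact_mod_cast hm
    have hsumsq : (∑ i, v i ^ 2) = (K:ℝ) := by
      have hsq : ∀ i ∈ univ, v i ^ 2 = if v i ≠ 0 then (1:ℝ) else 0 := by
        intro i _; rcases hv i with h|h|h <;> simp [h]
      rw [Finset.sum_congr rfl hsq, Finset.sum_boole, hKdef]
    have hsqK : 0 < Real.sqrt (K:ℝ) := Real.sqrt_pos.mpr hKR
    have hsqm : 0 < Real.sqrt (m:ℝ) := Real.sqrt_pos.mpr hmR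
    rw [hsumsq] at hα1
    have hα0 : 0 < α :=
      lt_of_lt_of_le (div_pos (mul_pos (by norm_num) hsqm) hsqK) hα1
    have h1 : 100 * Real.sqrt m ≤ α * Real.sqrt K := (div_le_iff₀ hsqK).mp hα1
    have hm2 : Real.sqrt (m:ℝ) * Real.sqrt (m:ℝ) = m := Real.mul_self_sqrt hmR.le
    have hK2 : Real.sqrt (K:ℝ) * Real.sqrt (K:ℝ) = (K:ℝ) := Real.mul_self_sqrt hKR.le
    have hαK : 10000 * (m:ℝ) ≤ α ^ 2 * K := by nlinarith [h1, hm2, hK2, hsqm.le, hsqK.le]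
    have hπ := Real.pi_pos
    have hcosnn : 0 ≤ Real.cos (2 * Real.pi * α) := by
      apply Real.cos_nonneg_of_mem_Icc
      rw [Set.mem_Icc]
      constructor <;> nlinarith [hπ, hα0.le, hα2]
    have hcosle := cos_le_exp hα0.le hα2
    have hpow : ∀ c : ℕ, Real.cos (2 * Real.pi * α) ^ c ≤ Real.exp (-(8 * α^2 * c)) := by
      intro c
      calc Real.cos (2 * Real.pi * α) ^ c ≤ Real.exp (-(8 * α^2)) ^ c :=
            pow_le_pow_left₀ hcosnn hcosle c
        _ = Real.exp (-(8 * α^2 * c)) := by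
            rw [← Real.exp_nat_mul]
            congr 1
            ring
    have hKsum : ∀ h : Fin n → Fin m,
        (K:ℝ) = ∑ j, (((univ.filter fun i => v i ≠ 0).filter fun i => h i = j).card : ℝ) := by
      intro h
      rw [hKdef]
      exact_mod_cast Finset.card_eq_sum_card_fiberwise
        (f := h) (s := univ.filter fun i => v i ≠ 0) (t := univ) (fun x _ => mem_univ _)
    have hbig : ∀ (h : Fin n → Fin m) (j : Fin m),
        (K:ℝ)/(2*m) ≤ (((univ.filter fun i => v i ≠ 0).filter fun i => h i = j).card : ℝ) →
        ‖Tbin q G α v h j‖ ≤ 3/5 := by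
      intro h j hcard
      have e1 := Tbin_bound q G α v hv hcosnn hG h j
      have e2 := hpow (((univ.filter fun i => v i ≠ 0).filter fun i => h i = j).card)
      have e3 : Real.exp (-(8 * α^2 * (((univ.filter fun i => v i ≠ 0).filter
          fun i => h i = j).card : ℝ))) ≤ Real.exp (-9) := by
        apply Real.exp_le_exp.mpr
        have h4 : α^2 * ((K:ℝ)/(2*m)) ≤ α^2 * (((univ.filter fun i => v i ≠ 0).filter
            fun i => h i = j).card : ℝ) := mul_le_mul_of_nonneg_left hcard (sq_nonneg α)
        have h6 : (5000:ℝ) ≤ α^2 * ((K:ℝ)/(2*m)) := by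
          rw [show α^2 * ((K:ℝ)/(2*m)) = α^2*K/(2*m) from by ring]
          rw [le_div_iff₀ (by positivity)]
          nlinarith [hαK]
        linarith
      have e4 : Real.exp (-9) ≤ 1/10 :=
        le_trans (exp_neg_le_inv (by norm_num)) (by norm_num)
      linarith
    have hprodsub : ∀ (h : Fin n → Fin m) (B : Finset (Fin m)),
        ‖∏ j, Tbin q G α v h j‖ ≤ ∏ j ∈ B, ‖Tbin q G α v h j‖ := by
      intro h B
      rw [norm_prod]
      rw [← Finset.prod_sdiff (Finset.subset_univ B)]
      apply mul_le_of_le_one_left (Finset.prod_nonneg fun j _ => norm_nonneg _)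
      exact Finset.prod_le_one (fun j _ => norm_nonneg _)
        (fun j _ => Tbin_norm_le_one hq hqsum G α v h j)
    have hFany : ∀ h : Fin n → Fin m, ‖∏ j, Tbin q G α v h j‖ ≤ 3/5 := by
      intro h
      have hne : (univ : Finset (Fin m)).Nonempty := ⟨⟨0, hm⟩, mem_univ _⟩
      obtain ⟨j0, _, hj0⟩ := Finset.exists_le_of_sum_le (f := fun _ : Fin m => (K:ℝ)/m)
        (g := fun j => (((univ.filter fun i => v i ≠ 0).filter fun i => h i = j).card : ℝ))
        hne
        (by
          rw [Finset.sum_const, Finset.card_univ, Fintype.card_fin, nsmul_eq_mul]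
          rw [mul_div_cancel₀ _ (ne_of_gt hmR)]
          exact (hKsum h).le)
      have hbb : (K:ℝ)/(2*m) ≤ (((univ.filter fun i => v i ≠ 0).filter
          fun i => h i = j0).card : ℝ) := by
        refine le_trans ?_ hj0
        apply div_le_div_of_nonneg_left hKR.le hmR
        linarith
      refine le_trans (hprodsub h {j0}) ?_
      rw [Finset.prod_singleton]
      exact hbig h j0 hbb
    have htri : ‖(∑ h, (ν h : ℂ) * ∏ j, Tbin q G α v h j) -
        ((Real.cos (2 * Real.pi * α) : ℝ) : ℂ) ^ K‖
        ≤ (∑ h, ν h * ‖∏ j, Tbin q G α v h j‖) + Real.cos (2 * Real.pi * α) ^ K := by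
      calc ‖(∑ h, (ν h : ℂ) * ∏ j, Tbin q G α v h j) -
          ((Real.cos (2 * Real.pi * α) : ℝ) : ℂ) ^ K‖
          ≤ ‖∑ h, (ν h : ℂ) * ∏ j, Tbin q G α v h j‖ +
            ‖((Real.cos (2 * Real.pi * α) : ℝ) : ℂ) ^ K‖ := norm_sub_le _ _
        _ ≤ _ := by
            apply add_le_add
            · calc ‖∑ h, (ν h : ℂ) * ∏ j, Tbin q G α v h j‖
                  ≤ ∑ h, ‖(ν h : ℂ) * ∏ j, Tbin q G α v h j‖ := norm_sum_le _ _
                _ = ∑ h, ν h * ‖∏ j, Tbin q G α v h j‖ := by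
                    apply Finset.sum_congr rfl; intro h _
                    rw [norm_mul, Complex.norm_real, Real.norm_eq_abs, abs_of_nonneg (hν h)]
            · rw [norm_pow, Complex.norm_real, Real.norm_eq_abs, abs_of_nonneg hcosnn]
    by_cases hεs : ε ≤ 3/4
    · -- small ε
      have hL : 0 < Real.log (1/ε) := Real.log_pos ((one_lt_div hε).mpr (by linarith))
      have hexpm : Real.exp (-(m:ℝ)) ≤ ε := by
        have hli : Real.log (1/ε) = - Real.log ε := by rw [one_div, Real.log_inv]
        have h2 : -(m:ℝ) ≤ Real.log ε := by linarith [hmlog]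
        calc Real.exp (-(m:ℝ)) ≤ Real.exp (Real.log ε) := Real.exp_le_exp.mpr h2
          _ = ε := Real.exp_log hε
      have hcosKe : Real.cos (2 * Real.pi * α) ^ K ≤ ε * ε := by
        have h2m : Real.exp (-(8 * α^2 * (K:ℝ))) ≤ Real.exp (-(2*(m:ℝ))) :=
          Real.exp_le_exp.mpr (by nlinarith [hαK, hmR.le])
        have hee : Real.exp (-(2*(m:ℝ))) = Real.exp (-(m:ℝ)) * Real.exp (-(m:ℝ)) := by
          rw [← Real.exp_add]; congr 1; ring
        calc Real.cos (2 * Real.pi * α) ^ K ≤ Real.exp (-(8 * α^2 * (K:ℝ))) := hpow K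
          _ ≤ Real.exp (-(m:ℝ)) * Real.exp (-(m:ℝ)) := by rw [← hee]; exact h2m
          _ ≤ ε * ε := mul_le_mul hexpm hexpm (Real.exp_pos _).le hε.le
      have h35 : (3/5:ℝ) ≤ Real.exp (-(1/2:ℝ)) := by
        have hsqe : Real.exp (1/2:ℝ) * Real.exp (1/2:ℝ) = Real.exp 1 := by
          rw [← Real.exp_add]; norm_num
        have he1 := Real.exp_one_lt_d9
        have hp := Real.exp_pos (1/2:ℝ)
        have h53 : Real.exp (1/2:ℝ) ≤ 5/3 := by nlinarith
        rw [Real.exp_neg]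
        have := inv_anti₀ hp h53
        calc (3/5:ℝ) = (5/3:ℝ)⁻¹ := by norm_num
          _ ≤ (Real.exp (1/2:ℝ))⁻¹ := this
      have hFgood : ∀ h : Fin n → Fin m, (∀ j : Fin m,
          (((univ.filter fun i => v i ≠ 0).filter fun i => h i = j).card : ℝ)
            ≤ (K : ℝ) / (100 * Real.log (1/ε))) →
          ‖∏ j, Tbin q G α v h j‖ ≤ ε ^ 25 := by
        intro h hg
        set Bs : Finset (Fin m) := univ.filter fun j =>
          (K:ℝ)/(2*m) ≤ (((univ.filter fun i => v i ≠ 0).filter fun i => h i = j).card : ℝ)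
          with hBs
        have hcount : 50 * Real.log (1/ε) ≤ (Bs.card : ℝ) := by
          have hsplit := Finset.sum_sdiff (f := fun j =>
            (((univ.filter fun i => v i ≠ 0).filter fun i => h i = j).card : ℝ))
            (Finset.subset_univ Bs)
          have hrest : ∑ j ∈ univ \ Bs,
              (((univ.filter fun i => v i ≠ 0).filter fun i => h i = j).card : ℝ)
              ≤ (K:ℝ)/2 := by
            have hb : ∀ j ∈ univ \ Bs,
                (((univ.filter fun i => v i ≠ 0).filter fun i => h i = j).card : ℝ)
                ≤ (K:ℝ)/(2*m) := by
              intro j hj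
              rw [Finset.mem_sdiff, hBs, Finset.mem_filter] at hj
              push_neg at hj
              exact (hj.2 (mem_univ j)).le
            calc ∑ j ∈ univ \ Bs,
                (((univ.filter fun i => v i ≠ 0).filter fun i => h i = j).card : ℝ)
                ≤ ((univ \ Bs).card : ℝ) * ((K:ℝ)/(2*m)) := by
                  have := Finset.sum_le_card_nsmul (univ \ Bs) _ _ hb
                  rwa [nsmul_eq_mul] at this
              _ ≤ (m:ℝ) * ((K:ℝ)/(2*m)) := by
                  apply mul_le_mul_of_nonneg_right _ (by positivity)
                  calc ((univ \ Bs).card : ℝ) ≤ ((univ : Finset (Fin m)).card : ℝ) := by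
                        exact_mod_cast Finset.card_le_card (Finset.sdiff_subset)
                    _ = m := by rw [Finset.card_univ, Fintype.card_fin]
              _ = (K:ℝ)/2 := by field_simp
          have hBsb : ∑ j ∈ Bs,
              (((univ.filter fun i => v i ≠ 0).filter fun i => h i = j).card : ℝ)
              ≤ (Bs.card : ℝ) * ((K:ℝ)/(100 * Real.log (1/ε))) := by
            have := Finset.sum_le_card_nsmul Bs _ _ (fun j _ => hg j)
            rwa [nsmul_eq_mul] at this
          have e6 : (K:ℝ)/2 ≤ ∑ j ∈ Bs,
              (((univ.filter fun i => v i ≠ 0).filter fun i => h i = j).card : ℝ) := by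
            have := hKsum h
            linarith [hsplit, hrest]
          have e8 : (K:ℝ)/2 ≤ ((Bs.card : ℝ) * K)/(100 * Real.log (1/ε)) := by
            calc (K:ℝ)/2 ≤ (Bs.card : ℝ) * ((K:ℝ)/(100 * Real.log (1/ε))) := e6.trans hBsb
              _ = ((Bs.card : ℝ) * K)/(100 * Real.log (1/ε)) := by ring
          have e9 := (le_div_iff₀ (by positivity)).mp e8
          have e10 : (50:ℝ) * Real.log (1/ε) * K ≤ (Bs.card : ℝ) * K := by nlinarith [e9]
          exact (mul_le_mul_iff_left₀ hKR).mp e10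
        calc ‖∏ j, Tbin q G α v h j‖ ≤ ∏ j ∈ Bs, ‖Tbin q G α v h j‖ := hprodsub h Bs
          _ ≤ ∏ j ∈ Bs, Real.exp (-(1/2:ℝ)) := by
              apply Finset.prod_le_prod (fun j _ => norm_nonneg _)
              intro j hj
              rw [hBs, Finset.mem_filter] at hj
              exact le_trans (hbig h j hj.2) h35
          _ = Real.exp (-(1/2:ℝ)) ^ Bs.card := Finset.prod_const _
          _ = Real.exp (-(1/2:ℝ) * Bs.card) := by rw [← Real.exp_nat_mul]; congr 1; ring
          _ ≤ Real.exp (-(25 * Real.log (1/ε))) := Real.exp_le_exp.mpr (by nlinarith [hcount])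
          _ = ε ^ 25 := by
              rw [show -(25 * Real.log (1/ε)) = ((25:ℕ):ℝ) * Real.log ε from by
                rw [one_div, Real.log_inv]; push_cast; ring]
              rw [Real.exp_nat_mul, Real.exp_log hε]
      -- combine with the spreading hypothesis
      have hgood := hspread (univ.filter fun i => v i ≠ 0) hkv
      set W : ℝ := ∑ h, ν h * (if ∀ j : Fin m,
          (((univ.filter fun i => v i ≠ 0).filter fun i => h i = j).card : ℝ)
            ≤ (K : ℝ) / (100 * Real.log (1/ε)) then (1:ℝ) else 0) with hW
      have hW1 : W ≤ 1 := by
        rw [hW]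
        refine le_trans (Finset.sum_le_sum (fun h _ => ?_)) (le_of_eq hνsum)
        split
        · rw [mul_one]
        · rw [mul_zero]; exact hν h
      have hWg : 1 - ε/4 ≤ W := hgood
      have hperh : ∀ h ∈ (univ : Finset (Fin n → Fin m)),
          ν h * ‖∏ j, Tbin q G α v h j‖ ≤
          ε^25 * (ν h * (if ∀ j : Fin m,
            (((univ.filter fun i => v i ≠ 0).filter fun i => h i = j).card : ℝ)
              ≤ (K : ℝ) / (100 * Real.log (1/ε)) then (1:ℝ) else 0))
          + (3/5) * (ν h * (1 - (if ∀ j : Fin m,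
            (((univ.filter fun i => v i ≠ 0).filter fun i => h i = j).card : ℝ)
              ≤ (K : ℝ) / (100 * Real.log (1/ε)) then (1:ℝ) else 0))) := by
        intro h _
        by_cases hg : ∀ j : Fin m,
            (((univ.filter fun i => v i ≠ 0).filter fun i => h i = j).card : ℝ)
              ≤ (K : ℝ) / (100 * Real.log (1/ε))
        · rw [if_pos hg]
          have := mul_le_mul_of_nonneg_left (hFgood h hg) (hν h)
          nlinarith [this]
        · rw [if_neg hg]
          have := mul_le_mul_of_nonneg_left (hFany h) (hν h)
          nlinarith [this]
      have hsum1 : ∑ h, ν h * ‖∏ j, Tbin q G α v h j‖ ≤ ε^25 * W + (3/5) * (1 - W) := by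
        calc ∑ h, ν h * ‖∏ j, Tbin q G α v h j‖
            ≤ ∑ h, (ε^25 * (ν h * (if ∀ j : Fin m,
                (((univ.filter fun i => v i ≠ 0).filter fun i => h i = j).card : ℝ)
                  ≤ (K : ℝ) / (100 * Real.log (1/ε)) then (1:ℝ) else 0))
              + (3/5) * (ν h * (1 - (if ∀ j : Fin m,
                (((univ.filter fun i => v i ≠ 0).filter fun i => h i = j).card : ℝ)
                  ≤ (K : ℝ) / (100 * Real.log (1/ε)) then (1:ℝ) else 0)))) :=
              Finset.sum_le_sum hperh
          _ = ε^25 * W + (3/5) * (1 - W) := by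
              rw [Finset.sum_add_distrib, ← Finset.mul_sum, ← Finset.mul_sum, ← hW]
              congr 1
              congr 1
              have : ∑ h, ν h * (1 - (if ∀ j : Fin m,
                  (((univ.filter fun i => v i ≠ 0).filter fun i => h i = j).card : ℝ)
                    ≤ (K : ℝ) / (100 * Real.log (1/ε)) then (1:ℝ) else 0))
                  = (∑ h, ν h) - W := by
                rw [hW, ← Finset.sum_sub_distrib]
                apply Finset.sum_congr rfl
                intro h _
                ring
              rw [this, hνsum]
      have hε25 : ε^25 ≤ ε * (3/4:ℝ)^24 := by
        calc ε^25 = ε * ε^24 := by ring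
          _ ≤ ε * (3/4:ℝ)^24 :=
            mul_le_mul_of_nonneg_left (pow_le_pow_left₀ hε.le hεs 24) hε.le
      have hnum : (3/4:ℝ)^24 ≤ 1/10 := by norm_num
      have hWnn : 0 ≤ W := by
        rw [hW]
        apply Finset.sum_nonneg
        intro h _
        apply mul_nonneg (hν h)
        split <;> norm_num
      have hεW : ε^25 * W ≤ ε * (1/10) := by
        calc ε^25 * W ≤ ε^25 * 1 := mul_le_mul_of_nonneg_left hW1 (by positivity)
          _ = ε^25 := mul_one _
          _ ≤ ε * (3/4:ℝ)^24 := hε25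
          _ ≤ ε * (1/10) := mul_le_mul_of_nonneg_left hnum hε.le
      have h1W : (3/5) * (1 - W) ≤ (3/5) * (ε/4) := by
        apply mul_le_mul_of_nonneg_left _ (by norm_num)
        linarith
      have hee : ε * ε ≤ ε * (3/4) := mul_le_mul_of_nonneg_left hεs hε.le
      linarith [htri, hsum1, hcosKe]
    · -- large ε
      push_neg at hεs
      have hcosK9 : Real.cos (2 * Real.pi * α) ^ K ≤ 1/10 := by
        have h9 : Real.exp (-(8 * α^2 * (K:ℝ))) ≤ Real.exp (-9) :=
          Real.exp_le_exp.mpr (by nlinarith [hαK, hm1])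
        have e4 : Real.exp (-9) ≤ 1/10 :=
          le_trans (exp_neg_le_inv (by norm_num)) (by norm_num)
        linarith [hpow K]
      have hsum35 : ∑ h, ν h * ‖∏ j, Tbin q G α v h j‖ ≤ 3/5 := by
        calc ∑ h, ν h * ‖∏ j, Tbin q G α v h j‖
            ≤ ∑ h, ν h * (3/5) := Finset.sum_le_sum
              (fun h _ => mul_le_mul_of_nonneg_left (hFany h) (hν h))
          _ = 3/5 := by rw [← Finset.sum_mul, hνsum, one_mul]
      linarith [htri, hcosK9, hsum35]
end
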